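/- arXiv:cs/0607032 — 8 statements merged into one kernel-verified Lean document; each statement's English description precedes it below -/
import Mathlib

section
/- For every integer n ≥ 1, the expected number of rounds M(n) of the Itai–Rodeh leader election algorithm is bounded above by B(n), i.e. M(n) ≤ B(n). -/
open Finset

lemma aux_split (f : ℕ → ℝ) (n : ℕ) (hn : 2 ≤ n) :
    ∑ k ∈ range (n+1), f k = f 0 + f 1 + (∑ k ∈ Icc 2 (n-1), f k) + f n := by
  rw [range_eq_Ico, ← Finset.sum_Ico_consecutive f (by omega : 0 ≤ 2) (by omega : 2 ≤ n+1)]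
  have h2 : ∑ k ∈ Ico 0 2, f k = f 0 + f 1 := by
    rw [show (2:ℕ) = 0 + 1 + 1 by rfl]
    rw [Finset.sum_Ico_succ_top (by omega), Finset.sum_Ico_succ_top (by omega)]
    simp
  have h3 : ∑ k ∈ Ico 2 (n+1), f k = (∑ k ∈ Icc 2 (n-1), f k) + f n := by
    rw [Finset.Ico_add_one_right_eq_Icc, show n = (n-1)+1 by omega, Finset.sum_Icc_succ_top (by omega)]
    rw [show n-1+1 = n by omega]
  rw [h2, h3]; ring

lemma aux_sum_b (n : ℕ) (hn : 2 ≤ n) :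
    ∑ k ∈ Finset.Icc 2 (n-1), (n.choose k : ℝ) * (1/(n:ℝ))^k * (1 - 1/(n:ℝ))^(n-k)
      = 1 - (1 - 1/(n:ℝ))^n - (1 - 1/(n:ℝ))^(n-1) - (1/(n:ℝ))^n := by
  have hx : (2:ℝ) ≤ (n:ℝ) := by exact_mod_cast hn
  have hx0 : (n:ℝ) ≠ 0 := by positivity
  set p : ℝ := 1/(n:ℝ) with hp
  set q : ℝ := 1 - 1/(n:ℝ) with hq
  have hone : (1:ℝ) = ∑ k ∈ range (n+1), p ^ k * q ^ (n - k) * (n.choose k) := by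
    have := add_pow p q n
    rw [show p + q = 1 by rw [hp, hq]; ring, one_pow] at this
    exact this
  have hsplit := aux_split (fun k => p ^ k * q ^ (n - k) * (n.choose k)) n hn
  rw [hsplit] at hone
  have e0 : p ^ 0 * q ^ (n - 0) * ((n.choose 0 : ℕ) : ℝ) = q ^ n := by simp
  have e1 : p ^ 1 * q ^ (n - 1) * ((n.choose 1 : ℕ) : ℝ) = q ^ (n-1) := by
    rw [Nat.choose_one_right]
    rw [pow_one, hp]
    field_simp
  have en : p ^ n * q ^ (n - n) * ((n.choose n : ℕ) : ℝ) = p ^ n := by simp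
  simp only [e0, e1, en] at hone
  have : ∑ k ∈ Finset.Icc 2 (n-1), (n.choose k : ℝ) * p^k * q^(n-k)
      = ∑ k ∈ Finset.Icc 2 (n-1), p ^ k * q ^ (n - k) * (n.choose k) := by
    apply Finset.sum_congr rfl; intro k _; ring
  rw [this]; linarith

lemma aux_Dpos (n : ℕ) (hn : 2 ≤ n) : 0 < 1 - (1 - 1/(n:ℝ))^n - (1/(n:ℝ))^n := by
  have hx : (2:ℝ) ≤ (n:ℝ) := by exact_mod_cast hn
  have hx0 : (0:ℝ) < (n:ℝ) := by linarith
  have hp1 : (1/(n:ℝ)) ≤ 1/2 := by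
    rw [div_le_div_iff₀ hx0 (by norm_num)]; linarith
  have hp0 : 0 < 1/(n:ℝ) := by positivity
  have h1 : (1 - 1/(n:ℝ))^n ≤ 1 - 1/(n:ℝ) :=
    pow_le_of_le_one (by linarith) (by linarith) (by omega)
  have h2 : (1/(n:ℝ))^n ≤ (1/(n:ℝ))^2 :=
    pow_le_pow_of_le_one (by linarith) (by linarith) (by omega)
  nlinarith

lemma aux_sler (n : ℕ) (hn : 1 ≤ n) :
    (1 - 1/((n:ℝ)+2))^(n+1) ≤ (1 - 1/((n:ℝ)+1))^n := by
  set x : ℝ := (n:ℝ) + 1 with hxdef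
  have hx : (2:ℝ) ≤ x := by
    have : (1:ℝ) ≤ (n:ℝ) := by exact_mod_cast hn
    simp [hxdef]; linarith
  have hx0 : (0:ℝ) < x := by linarith
  have hx1 : (0:ℝ) < x + 1 := by linarith
  have hA : (1 - 1/((n:ℝ)+2)) = x/(x+1) := by rw [hxdef]; field_simp; ring
  have hBq : (1 - 1/((n:ℝ)+1)) = (x-1)/x := by rw [hxdef]; field_simp
  rw [hA, hBq]
  -- Bernoulli : ((x^2-1)/x^2)^n ≥ 1 - n/x^2, and (n:ℝ) = x - 1
  have hbern : 1 + (n:ℝ) * (-(1/x^2)) ≤ (1 + (-(1/x^2)))^n := by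
    apply one_add_mul_le_pow
    have : 1/x^2 ≤ 1 := by
      rw [div_le_one (by positivity)]; nlinarith
    linarith
  have hn' : (n:ℝ) = x - 1 := by rw [hxdef]; ring
  have hkey : 1 ≤ ((x-1)/x)^n * ((x+1)/x)^(n+1) := by
    have hprod : ((x-1)/x)^n * ((x+1)/x)^(n+1) = (1 + (-(1/x^2)))^n * ((x+1)/x) := by
      rw [pow_succ, ← mul_assoc, ← mul_pow]
      congr 2
      field_simp; ring
    rw [hprod]
    have h2 : (1:ℝ) ≤ (1 - (x-1)/x^2) * ((x+1)/x) := by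
      rw [← sub_nonneg]
      have : (1 - (x-1)/x^2) * ((x+1)/x) - 1 = 1/x^3 := by field_simp; ring
      rw [this]; positivity
    have h3 : (1 - (x-1)/x^2) ≤ (1 + (-(1/x^2)))^n := by
      rw [← hn'] at *
      have : 1 - (n:ℝ)/x^2 = 1 + (n:ℝ) * (-(1/x^2)) := by ring
      rw [hn'] at this ⊢
      rw [this]; exact hbern
    have hpos : (0:ℝ) ≤ (x+1)/x := by positivity
    calc (1:ℝ) ≤ (1 - (x-1)/x^2) * ((x+1)/x) := h2
      _ ≤ (1 + (-(1/x^2)))^n * ((x+1)/x) := by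
          apply mul_le_mul_of_nonneg_right h3 hpos
  -- conclude
  have hApos : (0:ℝ) ≤ (x/(x+1))^(n+1) := by positivity
  have hcancel : (x/(x+1))^(n+1) * ((x+1)/x)^(n+1) = 1 := by
    rw [← mul_pow]
    rw [show x/(x+1) * ((x+1)/x) = 1 by field_simp]
    simp
  calc (x/(x+1))^(n+1) = (x/(x+1))^(n+1) * 1 := by ring
    _ ≤ (x/(x+1))^(n+1) * (((x-1)/x)^n * ((x+1)/x)^(n+1)) :=
        mul_le_mul_of_nonneg_left hkey hApos
    _ = ((x-1)/x)^n * ((x/(x+1))^(n+1) * ((x+1)/x)^(n+1)) := by ring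
    _ = ((x-1)/x)^n := by rw [hcancel]; ring

lemma aux_qnn (n : ℕ) (hn : 2 ≤ n) : 0 ≤ 1 - 1/(n:ℝ) ∧ 0 < 1 - 1/(n:ℝ) := by
  have hx : (2:ℝ) ≤ (n:ℝ) := by exact_mod_cast hn
  have hx0 : (0:ℝ) < (n:ℝ) := by linarith
  have hp1 : (1/(n:ℝ)) ≤ 1/2 := by
    rw [div_le_div_iff₀ hx0 (by norm_num)]; linarith
  constructor <;> linarith

lemma aux_DminusR (n : ℕ) (hn : 2 ≤ n)
    (hsum : ∑ k ∈ Finset.Icc 2 (n-1), (n.choose k : ℝ) * (1/(n:ℝ))^k * (1 - 1/(n:ℝ))^(n-k)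
      = 1 - (1 - 1/(n:ℝ))^n - (1 - 1/(n:ℝ))^(n-1) - (1/(n:ℝ))^n) :
    (1 - 1/(n:ℝ))^(n-1) ≤ 1 - (1 - 1/(n:ℝ))^n - (1/(n:ℝ))^n := by
  have hq := (aux_qnn n hn).1
  have hnn : 0 ≤ ∑ k ∈ Finset.Icc 2 (n-1),
      (n.choose k : ℝ) * (1/(n:ℝ))^k * (1 - 1/(n:ℝ))^(n-k) := by
    apply Finset.sum_nonneg
    intro k _
    have h1 : (0:ℝ) ≤ (n.choose k : ℝ) := by positivity
    have h2 : (0:ℝ) ≤ (1/(n:ℝ))^k := by positivity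
    have h3 : (0:ℝ) ≤ (1 - 1/(n:ℝ))^(n-k) := pow_nonneg hq _
    exact mul_nonneg (mul_nonneg h1 h2) h3
  rw [hsum] at hnn
  linarith

lemma aux_step (B : ℕ → ℝ)
    (hB : ∀ n : ℕ, 2 ≤ n →
      B n = B (n-1) + (1 - B (n-1) * (1 - 1/(n:ℝ))^(n-1)) /
        (1 - (1 - 1/(n:ℝ))^n - (1/(n:ℝ))^n))
    (n : ℕ) (hn : 1 ≤ n) (h0 : 0 ≤ B n) (hinv : B n * (1 - 1/((n:ℝ)+1))^n ≤ 1) :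
    B n ≤ B (n+1) ∧ 0 ≤ B (n+1) ∧ B (n+1) * (1 - 1/((n:ℝ)+1+1))^(n+1) ≤ 1 := by
  have h2 : 2 ≤ n + 1 := by omega
  have hBe := hB (n+1) h2
  simp only [Nat.add_sub_cancel] at hBe
  push_cast at hBe
  set r := (1 - 1/((n:ℝ)+1))^n with hrdef
  set D := 1 - (1 - 1/((n:ℝ)+1))^(n+1) - (1/((n:ℝ)+1))^(n+1) with hDdef
  have hD : 0 < D := by
    have := aux_Dpos (n+1) h2; push_cast at this; exact this
  have hDr : r ≤ D := by
    have := aux_DminusR (n+1) h2 (aux_sum_b (n+1) h2)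
    simp only [Nat.add_sub_cancel] at this
    push_cast at this
    exact this
  have hq : 0 < 1 - 1/((n:ℝ)+1) := by
    have := (aux_qnn (n+1) h2).2; push_cast at this; exact this
  have hr0 : 0 < r := pow_pos hq n
  have hstep : B n ≤ B (n+1) := by
    rw [hBe]
    have : 0 ≤ (1 - B n * r)/D := div_nonneg (by linarith) hD.le
    linarith
  have hle : B (n+1) ≤ 1/r := by
    rw [hBe]
    have h1 : (1 - B n * r)/D ≤ (1 - B n * r)/r := by
      gcongr
    have h2' : (1 - B n * r)/r = 1/r - B n := by
      field_simp
    linarith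
  refine ⟨hstep, by linarith, ?_⟩
  have hs : (1 - 1/((n:ℝ)+1+1))^(n+1) ≤ r := by
    have := aux_sler n hn
    rw [show (n:ℝ)+1+1 = (n:ℝ)+2 by ring]
    exact this
  have hs0 : (0:ℝ) ≤ (1 - 1/((n:ℝ)+1+1))^(n+1) := by
    apply pow_nonneg
    have hn1 : (1:ℝ) ≤ (n:ℝ) := by exact_mod_cast hn
    have : 1/((n:ℝ)+1+1) ≤ 1 := by
      rw [div_le_one (by linarith)]; linarith
    linarith
  calc B (n+1) * (1 - 1/((n:ℝ)+1+1))^(n+1)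
      ≤ (1/r) * (1 - 1/((n:ℝ)+1+1))^(n+1) := by
        apply mul_le_mul_of_nonneg_right hle hs0
    _ ≤ (1/r) * r := by
        apply mul_le_mul_of_nonneg_left hs (by positivity)
    _ = 1 := by field_simp

/-- For every integer n ≥ 1, M(n) ≤ B(n). -/
theorem itai_rodeh_mean_bounded_by_B
    (M B : ℕ → ℝ)
    (hM1 : M 1 = 0)
    (hM : ∀ n : ℕ, 2 ≤ n →
      M n = 1 + (1 - 1/(n:ℝ))^n * M n +
        ∑ k ∈ Finset.Icc 2 n,
          (n.choose k : ℝ) * (1/(n:ℝ))^k * (1 - 1/(n:ℝ))^(n-k) * M k)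
    (hB1 : B 1 = 0)
    (hB : ∀ n : ℕ, 2 ≤ n →
      B n = B (n-1) + (1 - B (n-1) * (1 - 1/(n:ℝ))^(n-1)) /
        (1 - (1 - 1/(n:ℝ))^n - (1/(n:ℝ))^n)) :
    ∀ n : ℕ, 1 ≤ n → M n ≤ B n := by
  have Inv : ∀ m : ℕ, 1 ≤ m → 0 ≤ B m ∧ B m * (1 - 1/((m:ℝ)+1))^m ≤ 1 := by
    intro m hm
    induction m, hm using Nat.le_induction with
    | base => constructor <;> simp [hB1]
    | succ m hm ih =>
      obtain ⟨h0, hinv⟩ := ih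
      have hst := aux_step B hB m hm h0 hinv
      refine ⟨hst.2.1, ?_⟩
      have h3 := hst.2.2
      push_cast
      exact h3
  have Bstep : ∀ m : ℕ, 1 ≤ m → B m ≤ B (m+1) := fun m hm =>
    (aux_step B hB m hm (Inv m hm).1 (Inv m hm).2).1
  have Bmono : ∀ j m : ℕ, 1 ≤ j → j ≤ m → B j ≤ B m := by
    intro j m hj hjm
    induction m with
    | zero => omega
    | succ m ihm =>
      rcases Nat.lt_or_ge j (m+1) with h | h
      · exact le_trans (ihm (by omega)) (Bstep m (by omega))
      · have : j = m+1 := by omega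
        rw [this]
  intro n
  induction n using Nat.strong_induction_on with
  | _ n ih =>
    intro hn
    rcases eq_or_lt_of_le hn with h1 | h2
    · rw [← h1]; simp [hM1, hB1]
    · have hn2 : 2 ≤ n := h2
      have hMe := hM n hn2
      have hsplit : ∑ k ∈ Icc 2 n,
            (n.choose k : ℝ) * (1/(n:ℝ))^k * (1 - 1/(n:ℝ))^(n-k) * M k
          = (∑ k ∈ Icc 2 (n-1),
              (n.choose k : ℝ) * (1/(n:ℝ))^k * (1 - 1/(n:ℝ))^(n-k) * M k)
            + (1/(n:ℝ))^n * M n := by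
        have e : Icc 2 n = Icc 2 ((n-1)+1) := by congr 1; omega
        rw [e, Finset.sum_Icc_succ_top (by omega)]
        rw [show n-1+1 = n by omega]
        simp [Nat.choose_self, Nat.sub_self]
      rw [hsplit] at hMe
      have hD := aux_Dpos n hn2
      have hq0 := (aux_qnn n hn2).1
      have hMn : M n = (1 + ∑ k ∈ Icc 2 (n-1),
            (n.choose k : ℝ) * (1/(n:ℝ))^k * (1 - 1/(n:ℝ))^(n-k) * M k)
          / (1 - (1 - 1/(n:ℝ))^n - (1/(n:ℝ))^n) := by
        rw [eq_div_iff hD.ne']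
        linear_combination hMe
      have hS : (∑ k ∈ Icc 2 (n-1),
            (n.choose k : ℝ) * (1/(n:ℝ))^k * (1 - 1/(n:ℝ))^(n-k) * M k)
          ≤ B (n-1) * (1 - (1 - 1/(n:ℝ))^n - (1 - 1/(n:ℝ))^(n-1) - (1/(n:ℝ))^n) := by
        have hSb : (∑ k ∈ Icc 2 (n-1),
              (n.choose k : ℝ) * (1/(n:ℝ))^k * (1 - 1/(n:ℝ))^(n-k) * M k)
            ≤ ∑ k ∈ Icc 2 (n-1),
              (n.choose k : ℝ) * (1/(n:ℝ))^k * (1 - 1/(n:ℝ))^(n-k) * B (n-1) := by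
          apply Finset.sum_le_sum
          intro k hk
          rw [Finset.mem_Icc] at hk
          have hMk : M k ≤ B k := ih k (by omega) (by omega)
          have hBk : B k ≤ B (n-1) := Bmono k (n-1) (by omega) (by omega)
          have hb : 0 ≤ (n.choose k : ℝ) * (1/(n:ℝ))^k * (1 - 1/(n:ℝ))^(n-k) := by
            have h1 : (0:ℝ) ≤ (n.choose k : ℝ) := by positivity
            have h2 : (0:ℝ) ≤ (1/(n:ℝ))^k := by positivity
            exact mul_nonneg (mul_nonneg h1 h2) (pow_nonneg hq0 _)
          exact mul_le_mul_of_nonneg_left (hMk.trans hBk) hb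
        rw [← Finset.sum_mul, aux_sum_b n hn2] at hSb
        linarith [hSb]
      rw [hMn]
      have habs : ∀ (t r D : ℝ), D ≠ 0 → (1 + t*(D - r))/D = t + (1 - t*r)/D := by
        intro t r D hDne
        field_simp
        ring
      have hfin : (1 + B (n-1) *
            (1 - (1 - 1/(n:ℝ))^n - (1 - 1/(n:ℝ))^(n-1) - (1/(n:ℝ))^n))
          / (1 - (1 - 1/(n:ℝ))^n - (1/(n:ℝ))^n) = B n := by
        rw [hB n hn2]
        rw [show (1 - (1 - 1/(n:ℝ))^n - (1 - 1/(n:ℝ))^(n-1) - (1/(n:ℝ))^n)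
            = (1 - (1 - 1/(n:ℝ))^n - (1/(n:ℝ))^n) - (1 - 1/(n:ℝ))^(n-1) from by ring]
        exact habs (B (n-1)) ((1 - 1/(n:ℝ))^(n-1)) (1 - (1 - 1/(n:ℝ))^n - (1/(n:ℝ))^n) hD.ne'
      rw [← hfin]
      gcongr
end

section
/- The sequence B(n) converges to e as n → ∞ (so that, combined with M(n) ≤ B(n), the expected number of rounds M(n) is a bounded sequence). -/
open Filter Topology

lemma contract_tendsto_zero {x c r : ℕ → ℝ} {ρ : ℝ} (hρ0 : 0 ≤ ρ) (hρ1 : ρ < 1)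
    (hc : ∀ᶠ n in atTop, |c n| ≤ ρ) (hr : Tendsto r atTop (𝓝 0))
    (hx : ∀ᶠ n in atTop, x (n + 1) = c n * x n + r n) :
    Tendsto x atTop (𝓝 0) := by
  rw [Metric.tendsto_atTop]
  intro ε hε
  obtain ⟨N₁, hN₁⟩ := hc.exists_forall_of_atTop
  have hρ1' : 0 < 1 - ρ := by linarith
  have hε' : 0 < ε * (1 - ρ) / 2 := by positivity
  obtain ⟨N₂, hN₂⟩ := (Metric.tendsto_atTop.mp hr) _ hε'
  obtain ⟨N₃, hN₃⟩ := hx.exists_forall_of_atTop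
  set N := max (max N₁ N₂) N₃ with hN
  have hN1 : N₁ ≤ N := le_trans (le_max_left _ _) (le_max_left _ _)
  have hN2 : N₂ ≤ N := le_trans (le_max_right _ _) (le_max_left _ _)
  have hN3 : N₃ ≤ N := le_max_right _ _
  have key : ∀ k, |x (N + k)| ≤ ρ ^ k * |x N| + ε / 2 := by
    intro k
    induction k with
    | zero => simp; nlinarith [abs_nonneg (x N)]
    | succ k ih =>
      have e1 : x (N + k + 1) = c (N + k) * x (N + k) + r (N + k) :=
        hN₃ _ (le_trans hN3 (Nat.le_add_right _ _))
      have e2 : |c (N + k)| ≤ ρ := hN₁ _ (le_trans hN1 (Nat.le_add_right _ _))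
      have e3 : |r (N + k)| < ε * (1 - ρ) / 2 := by
        have := hN₂ (N + k) (le_trans hN2 (Nat.le_add_right _ _))
        rwa [Real.dist_eq, sub_zero] at this
      have e4 : |x (N + k + 1)| ≤ |c (N + k)| * |x (N + k)| + |r (N + k)| := by
        rw [e1]; exact (abs_add_le _ _).trans (by rw [abs_mul])
      have h5 : |c (N + k)| * |x (N + k)| ≤ ρ * (ρ ^ k * |x N| + ε / 2) := by
        have := abs_nonneg (x (N + k))
        have := abs_nonneg (c (N + k))
        nlinarith
      have : (N + (k + 1)) = (N + k + 1) := by omega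
      rw [this, pow_succ]
      nlinarith
  have hpow : Tendsto (fun k => ρ ^ k * |x N|) atTop (𝓝 0) := by
    simpa using (tendsto_pow_atTop_nhds_zero_of_lt_one hρ0 hρ1).mul_const |x N|
  obtain ⟨K, hK⟩ := (Metric.tendsto_atTop.mp hpow) (ε / 2) (by positivity)
  refine ⟨N + K, fun n hn => ?_⟩
  obtain ⟨k, rfl⟩ : ∃ k, n = N + k := ⟨n - N, by omega⟩
  have hkK : K ≤ k := by omega
  have h6 : ρ ^ k ≤ ρ ^ K := pow_le_pow_of_le_one hρ0 hρ1.le hkK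
  have h7 := hK K le_rfl
  rw [Real.dist_eq, sub_zero] at h7 ⊢
  have h8 : ρ ^ K * |x N| < ε / 2 := lt_of_abs_lt h7
  have := key k
  have := abs_nonneg (x N)
  nlinarith [mul_le_mul_of_nonneg_right h6 (abs_nonneg (x N))]

/-- B(n) → e as n → ∞. -/
theorem B_tendsto_e
    (B : ℕ → ℝ)
    (hB1 : B 1 = 0)
    (hB : ∀ n : ℕ, 2 ≤ n →
      B n = B (n-1) + (1 - B (n-1) * (1 - 1/(n:ℝ))^(n-1)) /
        (1 - (1 - 1/(n:ℝ))^n - (1/(n:ℝ))^n)) :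
    Tendsto B atTop (𝓝 (Real.exp 1)) := by
  set E := Real.exp 1 with hEdef
  have hE0 : 0 < E := Real.exp_pos 1
  have hE2 : 2 < E := by
    have := Real.exp_one_gt_d9; rw [← hEdef] at this; norm_num at this; linarith
  set I := E⁻¹ with hIdef
  have hI0 : 0 < I := inv_pos.mpr hE0
  have hI2 : I < 1/2 := by
    rw [hIdef]
    rw [inv_lt_comm₀ hE0 (by norm_num)]
    norm_num; linarith
  have hD0 : 0 < 1 - I := by linarith
  have hIE : I = Real.exp (-1) := by rw [hIdef, hEdef, Real.exp_neg]
  set d : ℕ → ℝ := fun n => 1 - (1 - 1/(n:ℝ))^n - (1/(n:ℝ))^n with hddef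
  set c : ℕ → ℝ := fun n => 1 - (1 - 1/((n:ℝ)+1))^n / d (n+1) with hcdef
  set g : ℕ → ℝ := fun n => 1 / d (n+1) with hgdef
  set r : ℕ → ℝ := fun n => c n * E + g n - E with hrdef
  -- basic limits
  have hone : Tendsto (fun n : ℕ => 1 - 1/(n:ℝ)) atTop (𝓝 1) := by
    simpa using tendsto_const_nhds.sub (tendsto_one_div_atTop_nhds_zero_nat : Tendsto (fun n : ℕ => 1/(n:ℝ)) atTop (𝓝 0))
  have hP : Tendsto (fun n : ℕ => (1 - 1/(n:ℝ))^n) atTop (𝓝 I) := by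
    rw [hIE]
    have := Real.tendsto_one_add_div_pow_exp (-1)
    simpa [sub_eq_add_neg, neg_div] using this
  have hQ : Tendsto (fun n : ℕ => (1/(n:ℝ))^n) atTop (𝓝 0) := by
    apply squeeze_zero' (g := fun n : ℕ => (1/2 : ℝ)^n)
    · filter_upwards [eventually_ge_atTop 1] with n hn
      positivity
    · filter_upwards [eventually_ge_atTop 2] with n hn
      apply pow_le_pow_left₀ (by positivity)
      rw [div_le_div_iff₀ (by exact_mod_cast Nat.lt_of_lt_of_le two_pos hn) (by norm_num)]
      have : (2:ℝ) ≤ (n:ℝ) := by exact_mod_cast hn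
      linarith
    · exact tendsto_pow_atTop_nhds_zero_of_lt_one (by norm_num) (by norm_num)
  have hd : Tendsto d atTop (𝓝 (1 - I)) := by
    have := ((tendsto_const_nhds : Tendsto (fun _ : ℕ => (1:ℝ)) atTop (𝓝 1)).sub hP).sub hQ
    simpa [hddef] using this
  have hds : Tendsto (fun n => d (n+1)) atTop (𝓝 (1 - I)) :=
    hd.comp (tendsto_add_atTop_nat 1)
  have hones : Tendsto (fun n : ℕ => 1 - 1/((n:ℝ)+1)) atTop (𝓝 1) :=
    (hone.comp (tendsto_add_atTop_nat 1)).congr (fun n => by simp only [Function.comp_apply]; push_cast; ring)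
  have has : Tendsto (fun n : ℕ => (1 - 1/((n:ℝ)+1))^n) atTop (𝓝 I) := by
    have h1 : Tendsto (fun n : ℕ => (1 - 1/((n:ℝ)+1))^(n+1)) atTop (𝓝 I) :=
      (hP.comp (tendsto_add_atTop_nat 1)).congr (fun n => by simp only [Function.comp_apply]; push_cast; ring)
    have h2 : Tendsto (fun n : ℕ => (1 - 1/((n:ℝ)+1))^(n+1) / (1 - 1/((n:ℝ)+1)))
        atTop (𝓝 I) := by
      have h := h1.div hones one_ne_zero; rw [div_one] at h; exact h
    apply h2.congr'
    filter_upwards [eventually_ge_atTop 1] with n hn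
    have hne : (1 - 1/((n:ℝ)+1)) ≠ 0 := by
      have : (1:ℝ) ≤ (n:ℝ) := by exact_mod_cast hn
      have : 1/((n:ℝ)+1) < 1 := by
        rw [div_lt_one (by linarith)]; linarith
      linarith
    rw [pow_succ, mul_div_assoc, div_self hne, mul_one]
  set cinf : ℝ := 1 - I / (1 - I) with hcinfdef
  have hrat0 : 0 < I / (1 - I) := div_pos hI0 hD0
  have hrat1 : I / (1 - I) < 1 := (div_lt_one hD0).mpr (by linarith)
  have hcinf0 : 0 < cinf := by rw [hcinfdef]; linarith
  have hcinf1 : cinf < 1 := by rw [hcinfdef]; linarith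
  have hc : Tendsto c atTop (𝓝 cinf) := by
    rw [hcdef, hcinfdef]
    exact tendsto_const_nhds.sub (has.div hds (ne_of_gt hD0))
  have hg : Tendsto g atTop (𝓝 (1 / (1 - I))) := by
    rw [hgdef]
    exact tendsto_const_nhds.div hds (ne_of_gt hD0)
  have hr : Tendsto r atTop (𝓝 0) := by
    have h1 : Tendsto r atTop (𝓝 (cinf * E + 1/(1-I) - E)) :=
      ((hc.mul_const E).add hg).sub_const E
    have h2 : cinf * E + 1/(1-I) - E = 0 := by
      rw [hcinfdef]
      have hIE' : I * E = 1 := inv_mul_cancel₀ (ne_of_gt hE0)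
      field_simp
      nlinarith
    rwa [h2] at h1
  -- contraction bound
  set ρ : ℝ := (1 + cinf)/2 with hρdef
  have hρ0 : 0 ≤ ρ := by rw [hρdef]; linarith
  have hρ1 : ρ < 1 := by rw [hρdef]; linarith
  have hcb : ∀ᶠ n in atTop, |c n| ≤ ρ := by
    have := Metric.tendsto_atTop.mp hc ((1 - cinf)/2) (by linarith)
    obtain ⟨N, hN⟩ := this
    filter_upwards [eventually_ge_atTop N] with n hn
    have := hN n hn
    rw [Real.dist_eq, abs_lt] at this
    rw [abs_le, hρdef]
    constructor <;> linarith
  -- the recurrence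
  have hrec : ∀ᶠ n in atTop, (B (n+1) - E) = c n * (B n - E) + r n := by
    filter_upwards [eventually_ge_atTop 1] with n hn
    have h := hB (n+1) (by omega)
    simp only [Nat.add_sub_cancel] at h
    push_cast at h
    have hd' : d (n+1) = 1 - (1 - 1/((n:ℝ)+1))^(n+1) - (1/((n:ℝ)+1))^(n+1) := by
      rw [hddef]; push_cast; ring_nf
    simp only [hrdef, hcdef, hgdef]
    rw [hd', h]
    ring
  have hx : Tendsto (fun n => B n - E) atTop (𝓝 0) :=
    contract_tendsto_zero hρ0 hρ1 hcb hr hrec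
  have := hx.add_const E
  simpa using this
end

section
/- The sequence n·(e − B(n)) converges to e/2 as n → ∞; equivalently, writing Δ(n) := e − B(n), one has Δ(n) ~ c₁·c₆/n where c₀ = (e−2)/(e−1), c₁ = e/(2(e−1)), c₆ = 1/(1−c₀) = e−1 and c₁·c₆ = e/2. -/
open Filter Topology

lemma lin_rec_zero (ρ ε y : ℕ → ℝ) (c : ℝ) (hc : |c| < 1)
    (hρ : Tendsto ρ atTop (𝓝 c)) (hε : Tendsto ε atTop (𝓝 0))
    (hrec : ∀ᶠ n in atTop, y n = ρ n * y (n-1) + ε n) :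
    Tendsto y atTop (𝓝 0) := by
  rw [Metric.tendsto_atTop]
  intro e he
  set c' : ℝ := (|c| + 1) / 2 with hc'def
  have hc0 : 0 ≤ c' := by positivity
  have hcc : |c| < c' := by rw [hc'def]; linarith
  have hc1 : c' < 1 := by rw [hc'def]; linarith
  set M : ℝ := e * (1 - c') / 2 with hMdef
  have hM : 0 < M := by rw [hMdef]; nlinarith
  have h1 : ∀ᶠ n in atTop, |ρ n| < c' := (hρ.abs).eventually_lt_const hcc
  have h2 : ∀ᶠ n in atTop, |ε n| < M := by
    have h := hε.abs
    rw [abs_zero] at h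
    exact h.eventually_lt_const hM
  obtain ⟨N, hN⟩ := eventually_atTop.1 (h1.and (h2.and hrec))
  have key : ∀ k, |y (N + k)| ≤ c' ^ k * |y N| + e / 2 := by
    intro k
    induction k with
    | zero => simp; nlinarith
    | succ k ih =>
      have hge : N + (k+1) ≥ N := by omega
      obtain ⟨hρn, hεn, hrn⟩ := hN _ hge
      have hsub : N + (k+1) - 1 = N + k := by omega
      rw [hrn, hsub]
      calc |ρ (N+(k+1)) * y (N+k) + ε (N+(k+1))|
          ≤ |ρ (N+(k+1))| * |y (N+k)| + |ε (N+(k+1))| := by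
            refine (abs_add_le _ _).trans ?_; rw [abs_mul]
        _ ≤ c' * (c' ^ k * |y N| + e/2) + M := by
            have h3 : |ρ (N+(k+1))| * |y (N+k)| ≤ c' * (c' ^ k * |y N| + e/2) := by
              apply mul_le_mul hρn.le ih (abs_nonneg _) hc0
            linarith [hεn.le]
        _ ≤ c' ^ (k+1) * |y N| + e/2 := by
            rw [hMdef]; ring_nf; nlinarith
  have hpow : Tendsto (fun k => c' ^ k * |y N|) atTop (𝓝 0) := by
    simpa using (tendsto_pow_atTop_nhds_zero_of_lt_one hc0 hc1).mul_const (|y N|)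
  obtain ⟨K, hK⟩ := eventually_atTop.1 (hpow.eventually_lt_const (by linarith : (0:ℝ) < e/2))
  refine ⟨N + K, fun n hn => ?_⟩
  have : n = N + (n - N) := by omega
  rw [Real.dist_eq, sub_zero, this]
  have hk : n - N ≥ K := by omega
  calc |y (N + (n - N))| ≤ c' ^ (n-N) * |y N| + e/2 := key _
    _ < e/2 + e/2 := by linarith [hK _ hk]
    _ = e := by ring

lemma lin_rec (ρ t x : ℕ → ℝ) (c L : ℝ) (hc : |c| < 1)
    (hρ : Tendsto ρ atTop (𝓝 c)) (ht : Tendsto t atTop (𝓝 L))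
    (hrec : ∀ᶠ n in atTop, x n = ρ n * x (n-1) + t n) :
    Tendsto x atTop (𝓝 (L / (1 - c))) := by
  have hc1 : (1:ℝ) - c ≠ 0 := by
    intro h; rw [abs_lt] at hc; linarith [hc.2]
  set L' := L / (1 - c) with hL'
  have key : Tendsto (fun n => x n - L') atTop (𝓝 0) := by
    apply lin_rec_zero ρ (fun n => t n + (ρ n - 1) * L') _ c hc hρ
    · have : L + (c - 1) * L' = 0 := by rw [hL']; field_simp; ring
      simpa [this] using ht.add ((hρ.sub_const 1).mul_const L')
    · filter_upwards [hrec] with n hn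
      rw [hn]; ring
  have := key.add_const L'
  simpa using this

lemma key_log (x : ℝ) (hx0 : 0 < x) (hx : x ≤ 1/2) :
    |(1/x) * (1 + ((1-x)/x) * Real.log (1 - x)) - 1/2| ≤ 3*x := by
  have hx1 : |x| < 1 := by rw [abs_of_pos hx0]; linarith
  have hE := Real.abs_log_sub_add_sum_range_le hx1 2
  rw [Finset.sum_range_succ, Finset.sum_range_succ, Finset.sum_range_zero] at hE
  rw [abs_of_pos hx0] at hE
  simp only [pow_one, zero_add] at hE
  norm_num at hE
  -- hE : |x + x^2/2 + log(1-x)| ≤ x^3/(1-x)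
  set E : ℝ := x + x^2/2 + Real.log (1-x) with hEdef
  have hxne : x ≠ 0 := ne_of_gt hx0
  have hEb : |E| ≤ 2 * x^3 := by
    refine hE.trans ?_
    rw [div_le_iff₀ (by linarith)]
    nlinarith [pow_pos hx0 3]
  have hL : Real.log (1-x) = E - x - x^2/2 := by rw [hEdef]; ring
  have heq : (1/x) * (1 + ((1-x)/x) * Real.log (1 - x)) - 1/2
      = x/2 + (1-x)*E/x^2 := by
    rw [hL]; field_simp; ring
  rw [heq]
  have h1 : |(1-x)*E/x^2| ≤ 2*x := by
    rw [abs_div, abs_mul]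
    rw [div_le_iff₀ (by positivity)]
    have h2 : |1 - x| ≤ 1 := by rw [abs_of_pos (by linarith)]; linarith
    have h3 : |x^2| = x^2 := abs_of_pos (by positivity)
    rw [h3]
    nlinarith [abs_nonneg E, abs_nonneg (1-x)]
  calc |x/2 + (1-x)*E/x^2| ≤ |x/2| + |(1-x)*E/x^2| := abs_add_le _ _
    _ ≤ x/2 + 2*x := by rw [abs_of_pos (by linarith)]; linarith
    _ ≤ 3*x := by linarith

lemma exp_val_aux : (1/2 / (1 - Real.exp (-1))) / (1 - (1 - Real.exp (-1)/(1 - Real.exp (-1)))) = Real.exp 1 / 2 := by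
  have hepos : 0 < Real.exp (-1) := Real.exp_pos _
  have hemul : Real.exp (-1) * Real.exp 1 = 1 := by rw [← Real.exp_add]; norm_num
  have hehalf : Real.exp (-1) < 1/2 := by nlinarith [Real.exp_one_gt_d9]
  have hne : (1:ℝ) - Real.exp (-1) ≠ 0 := by linarith
  have h2 : (1:ℝ) - (1 - Real.exp (-1)/(1 - Real.exp (-1)))
      = Real.exp (-1)/(1 - Real.exp (-1)) := by ring
  rw [h2, div_div_div_eq]
  rw [div_eq_div_iff (by positivity) (by norm_num : (2:ℝ) ≠ 0)]
  nlinarith [hemul]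

/-- n·(e − B(n)) → e/2 as n → ∞, i.e. Δ(n) = e − B(n) ~ (e/2)/n. -/
theorem Delta_asymptotics
    (B : ℕ → ℝ)
    (hB1 : B 1 = 0)
    (hB : ∀ n : ℕ, 2 ≤ n →
      B n = B (n-1) + (1 - B (n-1) * (1 - 1/(n:ℝ))^(n-1)) /
        (1 - (1 - 1/(n:ℝ))^n - (1/(n:ℝ))^n)) :
    Tendsto (fun n : ℕ => (n:ℝ) * (Real.exp 1 - B n)) atTop (𝓝 (Real.exp 1 / 2)) := by
  -- basic positivity facts about exp
  have hepos : 0 < Real.exp (-1) := Real.exp_pos _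
  have hemul : Real.exp (-1) * Real.exp 1 = 1 := by
    rw [← Real.exp_add]; norm_num
  have hehalf : Real.exp (-1) < 1/2 := by
    nlinarith [Real.exp_one_gt_d9]
  have hne : (1:ℝ) - Real.exp (-1) ≠ 0 := by linarith
  -- f n = 1 + (n-1) log(1 - 1/n)
  set f : ℕ → ℝ := fun n => 1 + ((n:ℝ)-1) * Real.log (1 - 1/(n:ℝ)) with hfdef
  have hkey : ∀ n : ℕ, 2 ≤ n → |(n:ℝ) * f n - 1/2| ≤ 3/(n:ℝ) := by
    intro n hn
    have hn2 : (2:ℝ) ≤ (n:ℝ) := by exact_mod_cast hn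
    have hx0 : 0 < 1/(n:ℝ) := by positivity
    have hx : 1/(n:ℝ) ≤ 1/2 := by
      rw [div_le_div_iff₀ (by linarith) (by norm_num)]; linarith
    have h := key_log (1/(n:ℝ)) hx0 hx
    have e1 : (1:ℝ)/(1/(n:ℝ)) = (n:ℝ) := one_div_one_div _
    have e2 : (1 - 1/(n:ℝ))/(1/(n:ℝ)) = (n:ℝ) - 1 := by
      field_simp
    rw [e1, e2, mul_one_div] at h
    exact h
  have hfb : ∀ n : ℕ, 2 ≤ n → |f n| ≤ 2/(n:ℝ) := by
    intro n hn
    have hn2 : (2:ℝ) ≤ (n:ℝ) := by exact_mod_cast hn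
    have h3 : 3/(n:ℝ) ≤ 3/2 := by
      rw [div_le_div_iff₀ (by linarith) (by norm_num)]; linarith
    have habs := abs_sub_abs_le_abs_sub ((n:ℝ) * f n) (1/2)
    have h12 : |(1:ℝ)/2| = 1/2 := by norm_num
    have hb : |(n:ℝ) * f n| ≤ 2 := by
      have := hkey n hn; rw [h12] at habs; linarith
    rw [le_div_iff₀ (by linarith : (0:ℝ) < (n:ℝ))]
    calc |f n| * (n:ℝ) = |(n:ℝ) * f n| := by
          rw [abs_mul, abs_of_pos (by linarith : (0:ℝ) < (n:ℝ))]; ring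
      _ ≤ 2 := hb
  have hf0 : Tendsto f atTop (𝓝 0) := by
    have hbound : ∀ᶠ n : ℕ in atTop, ‖f n‖ ≤ 2/(n:ℝ) := by
      filter_upwards [eventually_ge_atTop 2] with n hn
      simpa [Real.norm_eq_abs] using hfb n hn
    exact squeeze_zero_norm' hbound (tendsto_const_div_atTop_nhds_zero_nat 2)
  -- e * A n = exp (f n)
  have hEA : ∀ n : ℕ, 2 ≤ n →
      Real.exp 1 * (1 - 1/(n:ℝ))^(n-1) = Real.exp (f n) := by
    intro n hn
    have hn2 : (2:ℝ) ≤ (n:ℝ) := by exact_mod_cast hn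
    have hpos : 0 < 1 - 1/(n:ℝ) := by
      rw [sub_pos, div_lt_one (by linarith)]; linarith
    have hcast : ((n-1:ℕ):ℝ) = (n:ℝ) - 1 := by
      have : 1 ≤ n := by omega
      push_cast [this]; ring
    have hA : (1 - 1/(n:ℝ))^(n-1)
        = Real.exp (((n:ℝ)-1) * Real.log (1 - 1/(n:ℝ))) := by
      rw [← hcast, Real.exp_nat_mul, Real.exp_log hpos]
    rw [hA, ← Real.exp_add, hfdef]
  -- limit of A
  have hA : Tendsto (fun n : ℕ => (1 - 1/(n:ℝ))^(n-1)) atTop (𝓝 (Real.exp (-1))) := by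
    have h1 : Tendsto (fun n : ℕ => Real.exp (f n - 1)) atTop (𝓝 (Real.exp (-1))) := by
      have h2 : Tendsto (fun n : ℕ => f n - 1) atTop (𝓝 (-1)) := by
        simpa using hf0.sub_const 1
      exact (Real.continuous_exp.tendsto (-1)).comp h2
    apply h1.congr'
    filter_upwards [eventually_ge_atTop 2] with n hn
    rw [Real.exp_sub, ← hEA n hn]
    field_simp [Real.exp_ne_zero]
  -- limit of n (e A n - 1)
  have hta : Tendsto (fun n : ℕ => (n:ℝ) * (Real.exp 1 * (1 - 1/(n:ℝ))^(n-1) - 1))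
      atTop (𝓝 (1/2)) := by
    have h0 : Tendsto (fun n : ℕ => (n:ℝ) * (Real.exp 1 * (1 - 1/(n:ℝ))^(n-1) - 1) - 1/2)
        atTop (𝓝 0) := by
      refine squeeze_zero_norm' (a := fun n : ℕ => 7/(n:ℝ)) ?_ (tendsto_const_div_atTop_nhds_zero_nat 7)
      filter_upwards [eventually_ge_atTop 2] with n hn
      have hn2 : (2:ℝ) ≤ (n:ℝ) := by exact_mod_cast hn
      have hnpos : (0:ℝ) < (n:ℝ) := by linarith
      rw [Real.norm_eq_abs, hEA n hn]
      have h1 := hkey n hn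
      have h2 : |f n| ≤ 2/(n:ℝ) := hfb n hn
      have h3 : |f n| ≤ 1 := by
        refine h2.trans ?_
        rw [div_le_one hnpos]; linarith
      have h4 := Real.abs_exp_sub_one_sub_id_le h3
      have h5 : (f n)^2 ≤ (2/(n:ℝ))^2 := by
        rw [← sq_abs]
        exact pow_le_pow_left₀ (abs_nonneg _) h2 2
      have heq : (n:ℝ) * (Real.exp (f n) - 1) - 1/2
          = ((n:ℝ) * f n - 1/2) + (n:ℝ) * (Real.exp (f n) - 1 - f n) := by ring
      rw [heq]
      calc |((n:ℝ) * f n - 1/2) + (n:ℝ) * (Real.exp (f n) - 1 - f n)|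
          ≤ |(n:ℝ) * f n - 1/2| + |(n:ℝ) * (Real.exp (f n) - 1 - f n)| := abs_add_le _ _
        _ ≤ 3/(n:ℝ) + (n:ℝ) * (f n)^2 := by
            rw [abs_mul, abs_of_pos hnpos]
            have h6 := mul_le_mul_of_nonneg_left h4 (le_of_lt hnpos)
            exact add_le_add h1 h6
        _ ≤ 3/(n:ℝ) + (n:ℝ) * (2/(n:ℝ))^2 := by nlinarith
        _ = 7/(n:ℝ) := by field_simp; ring
    have := h0.add_const (1/2)
    simpa using this
  -- limit of (1/n)^n
  have hg0 : Tendsto (fun n : ℕ => (1/(n:ℝ))^n) atTop (𝓝 0) := by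
    refine squeeze_zero_norm' (a := fun n : ℕ => 1/(n:ℝ)) ?_ tendsto_one_div_atTop_nhds_zero_nat
    filter_upwards [eventually_ge_atTop 1] with n hn
    have hn1 : (1:ℝ) ≤ (n:ℝ) := by exact_mod_cast hn
    have hx0 : (0:ℝ) ≤ 1/(n:ℝ) := by positivity
    have hx1 : 1/(n:ℝ) ≤ 1 := by rw [div_le_one (by linarith)]; linarith
    rw [Real.norm_eq_abs, abs_of_nonneg (pow_nonneg hx0 n)]
    calc (1/(n:ℝ))^n ≤ (1/(n:ℝ))^1 := pow_le_pow_of_le_one hx0 hx1 hn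
      _ = 1/(n:ℝ) := pow_one _
  -- limit of D
  have h1n : Tendsto (fun n : ℕ => 1 - 1/(n:ℝ)) atTop (𝓝 1) := by
    simpa using (tendsto_const_nhds : Tendsto (fun _ : ℕ => (1:ℝ)) atTop (𝓝 1)).sub tendsto_one_div_atTop_nhds_zero_nat
  have hD : Tendsto (fun n : ℕ => 1 - (1 - 1/(n:ℝ))^n - (1/(n:ℝ))^n)
      atTop (𝓝 (1 - Real.exp (-1))) := by
    have h2 : Tendsto (fun n : ℕ => 1 - (1 - 1/(n:ℝ))^(n-1) * (1 - 1/(n:ℝ)) - (1/(n:ℝ))^n)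
        atTop (𝓝 (1 - Real.exp (-1) * 1 - 0)) :=
      (tendsto_const_nhds.sub (hA.mul h1n)).sub hg0
    rw [show (1 - Real.exp (-1) * 1 - 0 : ℝ) = 1 - Real.exp (-1) by ring] at h2
    apply h2.congr'
    filter_upwards [eventually_ge_atTop 1] with n hn
    congr 1
    congr 1
    rw [← pow_succ]
    congr 1
    omega
  have hDpos : ∀ᶠ n : ℕ in atTop, 0 < 1 - (1 - 1/(n:ℝ))^n - (1/(n:ℝ))^n :=
    hD.eventually_const_lt (by linarith)
  -- limit of rho
  have hratio : Tendsto (fun n : ℕ => (n:ℝ)/((n:ℝ)-1)) atTop (𝓝 1) := by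
    have h2 : Tendsto (fun n : ℕ => (1 - 1/(n:ℝ))⁻¹) atTop (𝓝 1) := by
      simpa using h1n.inv₀ one_ne_zero
    apply h2.congr'
    filter_upwards [eventually_ge_atTop 2] with n hn
    have hn2 : (2:ℝ) ≤ (n:ℝ) := by exact_mod_cast hn
    rw [inv_eq_one_div]
    field_simp
  set c₀ : ℝ := 1 - Real.exp (-1)/(1 - Real.exp (-1)) with hc₀def
  have hρlim : Tendsto (fun n : ℕ =>
      (1 - (1 - 1/(n:ℝ))^(n-1) / (1 - (1 - 1/(n:ℝ))^n - (1/(n:ℝ))^n)) * ((n:ℝ)/((n:ℝ)-1)))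
      atTop (𝓝 c₀) := by
    have h : Tendsto (fun n : ℕ =>
        (1 - (1 - 1/(n:ℝ))^(n-1) / (1 - (1 - 1/(n:ℝ))^n - (1/(n:ℝ))^n)) * ((n:ℝ)/((n:ℝ)-1)))
        atTop (𝓝 ((1 - Real.exp (-1)/(1 - Real.exp (-1))) * 1)) :=
      (tendsto_const_nhds.sub (hA.div hD hne)).mul hratio
    rw [mul_one] at h
    rw [hc₀def]
    exact h
  have hc₀abs : |c₀| < 1 := by
    have hr0 : 0 < Real.exp (-1)/(1 - Real.exp (-1)) := by
      apply div_pos hepos; linarith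
    have hr1 : Real.exp (-1)/(1 - Real.exp (-1)) < 1 := by
      rw [div_lt_one (by linarith)]; linarith
    rw [hc₀def, abs_lt]
    constructor <;> linarith
  -- limit of t
  set c₁ : ℝ := (1/2) / (1 - Real.exp (-1)) with hc₁def
  have htlim : Tendsto (fun n : ℕ =>
      ((n:ℝ) * (Real.exp 1 * (1 - 1/(n:ℝ))^(n-1) - 1)) / (1 - (1 - 1/(n:ℝ))^n - (1/(n:ℝ))^n))
      atTop (𝓝 c₁) := hta.div hD hne
  -- the recurrence
  have hrec : ∀ᶠ n : ℕ in atTop,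
      (n:ℝ) * (Real.exp 1 - B n) =
      (1 - (1 - 1/(n:ℝ))^(n-1) / (1 - (1 - 1/(n:ℝ))^n - (1/(n:ℝ))^n)) * ((n:ℝ)/((n:ℝ)-1)) *
        (((n-1:ℕ):ℝ) * (Real.exp 1 - B (n-1))) +
      ((n:ℝ) * (Real.exp 1 * (1 - 1/(n:ℝ))^(n-1) - 1)) / (1 - (1 - 1/(n:ℝ))^n - (1/(n:ℝ))^n) := by
    filter_upwards [hDpos, eventually_ge_atTop 2] with n hD0 hn
    have hn2 : (2:ℝ) ≤ (n:ℝ) := by exact_mod_cast hn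
    have hn0 : (n:ℝ) ≠ 0 := by linarith
    have hn1 : (n:ℝ) - 1 ≠ 0 := by linarith
    have hDne : 1 - (1 - 1/(n:ℝ))^n - (1/(n:ℝ))^n ≠ 0 := ne_of_gt hD0
    have hcast : ((n-1:ℕ):ℝ) = (n:ℝ) - 1 := by
      have : 1 ≤ n := by omega
      push_cast [this]; ring
    rw [hB n hn, hcast]
    field_simp
    ring
  -- conclude
  have hfin := lin_rec _ _ _ c₀ c₁ hc₀abs hρlim htlim hrec
  have hval : c₁ / (1 - c₀) = Real.exp 1 / 2 := by
    rw [hc₁def, hc₀def]; exact exp_val_aux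
  rwa [hval] at hfin
end

section
/- For the coefficients of the recurrence Δ(n) = a(n)·Δ(n−1) + β(n)/n (where Δ(n) = e − B(n)): a(2) = 0, and for every integer n ≥ 3 one has 0 < a(n) < 1/2 and 0 < β(n) < 1; moreover a(n) → (e−2)/(e−1) and β(n) → e/(2(e−1)) as n → ∞. -/
set_option maxHeartbeats 1600000

open Filter Topology


lemma log_lb (u : ℝ) (hu : 0 < u) : u - u^2/2 < Real.log (1+u) := by
  have key : StrictMonoOn (fun x : ℝ => Real.log (1+x) - (x - x^2/2)) (Set.Ici 0) := by
    apply strictMonoOn_of_deriv_pos (convex_Ici 0)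
    · apply ContinuousOn.sub
      · apply ContinuousOn.log (by fun_prop)
        intro x hx
        simp only [Set.mem_Ici] at hx
        positivity
      · fun_prop
    · intro x hx
      rw [interior_Ici] at hx
      have hx0 : (0:ℝ) < x := hx
      have h1 : HasDerivAt (fun x : ℝ => Real.log (1+x)) (1/(1+x)) x := by
        have := (Real.hasDerivAt_log (by positivity : (1:ℝ)+x ≠ 0)).comp x
          ((hasDerivAt_id x).const_add 1)
        exact this.congr_deriv (by simp)
      have h2 : HasDerivAt (fun x : ℝ => x - x^2/2) (1 - x) x := by
        have := (hasDerivAt_id x).sub ((hasDerivAt_pow 2 x).div_const 2)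
        exact this.congr_deriv (by norm_num)
      rw [show deriv (fun x : ℝ => Real.log (1+x) - (x - x^2/2)) x = _ from (h1.sub h2).deriv]
      have he : 1/(1+x) - (1-x) = x^2/(1+x) := by field_simp; ring
      rw [he]; positivity
  have h0 := key (Set.self_mem_Ici) (Set.mem_Ici.2 hu.le) hu
  simp only [add_zero, Real.log_one] at h0
  norm_num at h0
  linarith

lemma log_ub (u : ℝ) (hu : 0 < u) : Real.log (1+u) < u - u^2/2 + u^3/3 := by
  have key : StrictMonoOn (fun x : ℝ => (x - x^2/2 + x^3/3) - Real.log (1+x)) (Set.Ici 0) := by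
    apply strictMonoOn_of_deriv_pos (convex_Ici 0)
    · apply ContinuousOn.sub (by fun_prop)
      apply ContinuousOn.log (by fun_prop)
      intro x hx
      simp only [Set.mem_Ici] at hx
      positivity
    · intro x hx
      rw [interior_Ici] at hx
      have hx0 : (0:ℝ) < x := hx
      have h1 : HasDerivAt (fun x : ℝ => Real.log (1+x)) (1/(1+x)) x := by
        have := (Real.hasDerivAt_log (by positivity : (1:ℝ)+x ≠ 0)).comp x
          ((hasDerivAt_id x).const_add 1)
        exact this.congr_deriv (by simp)
      have h2 : HasDerivAt (fun x : ℝ => x - x^2/2 + x^3/3) (1 - x + x^2) x := by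
        have := ((hasDerivAt_id x).sub ((hasDerivAt_pow 2 x).div_const 2)).add
          ((hasDerivAt_pow 3 x).div_const 3)
        norm_num at this
        exact this
      rw [show deriv (fun x : ℝ => (x - x^2/2 + x^3/3) - Real.log (1+x)) x = _ from (h2.sub h1).deriv]
      have he : (1 - x + x^2) - 1/(1+x) = x^3/(1+x) := by field_simp; ring
      rw [he]; positivity
  have h0 := key (Set.self_mem_Ici) (Set.mem_Ici.2 hu.le) hu
  simp only [add_zero, Real.log_one] at h0
  norm_num at h0
  linarith


lemma exp_lt_inv_one_sub {t : ℝ} (h0 : 0 < t) (h1 : t < 1) : Real.exp t < 1/(1-t) := by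
  have h := Real.add_one_lt_exp (x := -t) (by linarith)
  have h2 : 1 - t < Real.exp (-t) := by linarith
  have h3 : Real.exp (-t) = (Real.exp t)⁻¹ := Real.exp_neg t
  rw [h3] at h2
  have hep := Real.exp_pos t
  rw [lt_div_iff₀ (by linarith)]
  calc Real.exp t * (1-t) < Real.exp t * (Real.exp t)⁻¹ :=
        mul_lt_mul_of_pos_left h2 hep
    _ = 1 := mul_inv_cancel₀ (ne_of_gt hep)

lemma p_est (n : ℕ) (hn : 2 ≤ n) :
    Real.exp (-1) < (1 - 1/(n:ℝ))^(n-1) ∧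
    (1 - 1/(n:ℝ))^(n-1) < Real.exp (-1 + 1/(2*((n:ℝ)-1))) ∧
    Real.exp (-1 + 1/(2*((n:ℝ)-1)) - 1/(3*((n:ℝ)-1)^2)) < (1 - 1/(n:ℝ))^(n-1) := by
  set m := (n:ℝ) with hmdef
  have hm : (2:ℝ) ≤ m := by rw [hmdef]; exact_mod_cast hn
  have hm1 : (0:ℝ) < m - 1 := by linarith
  have hm0 : (0:ℝ) < m := by linarith
  set u := 1/(m-1) with hudef
  have hu : 0 < u := by positivity
  have hx : 1 - 1/m = (1+u)⁻¹ := by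
    refine eq_inv_of_mul_eq_one_left ?_
    rw [hudef]; field_simp; ring
  have hmu : (m-1)*u = 1 := by rw [hudef]; field_simp
  have hcast : ((n-1 : ℕ):ℝ) = m - 1 := by
    rw [hmdef]; push_cast [Nat.cast_sub (by omega : 1 ≤ n)]; ring
  have hxpos : (0:ℝ) < 1 - 1/m := by rw [hx]; positivity
  have hppos : (0:ℝ) < (1 - 1/m)^(n-1) := pow_pos hxpos _
  have hlog : Real.log ((1 - 1/m)^(n-1)) = -((m-1) * Real.log (1+u)) := by
    rw [Real.log_pow, hx, Real.log_inv, hcast]; ring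
  have hlb := log_lb u hu
  have hub := log_ub u hu
  have hloglt : Real.log (1+u) < u := by
    have := Real.log_lt_sub_one_of_pos (by positivity : (0:ℝ) < 1+u) (by linarith : (1:ℝ)+u ≠ 1)
    linarith
  have e1 : (m-1)*(u - u^2/2) = 1 - u/2 := by
    have h : (m-1)*(u - u^2/2) = (m-1)*u - ((m-1)*u)*u/2 := by ring
    rw [h, hmu]; ring
  have e2 : (m-1)*(u - u^2/2 + u^3/3) = 1 - u/2 + u^2/3 := by
    have h : (m-1)*(u - u^2/2 + u^3/3) = (m-1)*u - ((m-1)*u)*u/2 + ((m-1)*u)*u^2/3 := by ring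
    rw [h, hmu]; ring
  have e3 : (m-1)*u = 1 := hmu
  have hu2 : u/2 = 1/(2*(m-1)) := by rw [hudef, div_div, mul_comm]
  have hu3 : u^2/3 = 1/(3*(m-1)^2) := by rw [hudef, div_pow, one_pow, div_div, mul_comm]
  refine ⟨?_, ?_, ?_⟩
  · rw [← Real.exp_log hppos, hlog]
    apply Real.exp_lt_exp.2
    have := mul_lt_mul_of_pos_left hloglt hm1
    rw [e3] at this
    linarith
  · rw [← Real.exp_log hppos, hlog]
    apply Real.exp_lt_exp.2
    have := mul_lt_mul_of_pos_left hlb hm1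
    rw [e1] at this
    rw [← hu2]
    linarith
  · rw [← Real.exp_log hppos, hlog]
    apply Real.exp_lt_exp.2
    have := mul_lt_mul_of_pos_left hub hm1
    rw [e2] at this
    rw [← hu2, ← hu3]
    linarith

lemma p_le_half (n : ℕ) (hn : 2 ≤ n) : (1 - 1/(n:ℝ))^(n-1) ≤ 1/2 := by
  set m := (n:ℝ) with hmdef
  have hm : (2:ℝ) ≤ m := by rw [hmdef]; exact_mod_cast hn
  have hm1 : (0:ℝ) < m - 1 := by linarith
  have hm0 : (0:ℝ) < m := by linarith
  set u := 1/(m-1) with hudef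
  have hu : 0 < u := by positivity
  have hx : 1 - 1/m = (1+u)⁻¹ := by
    refine eq_inv_of_mul_eq_one_left ?_
    rw [hudef]; field_simp; ring
  have hcast : ((n-1 : ℕ):ℝ) = m - 1 := by
    rw [hmdef]; push_cast [Nat.cast_sub (by omega : 1 ≤ n)]; ring
  have hb := one_add_mul_le_pow (by linarith : (-2:ℝ) ≤ u) (n-1)
  rw [hcast] at hb
  have hmu : (m-1)*u = 1 := by rw [hudef]; field_simp
  have h2 : (2:ℝ) ≤ (1+u)^(n-1) := by rw [hmu] at hb; linarith
  rw [hx, inv_pow]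
  have := inv_anti₀ (by norm_num : (0:ℝ) < 2) h2
  rw [show (1:ℝ)/2 = 2⁻¹ by norm_num]
  exact this


lemma coeff_aux_bounds (a β : ℕ → ℝ)
    (ha : ∀ n : ℕ, 2 ≤ n →
      a n = 1 - (1 - 1/(n:ℝ))^(n-1) / (1 - (1 - 1/(n:ℝ))^n - (1/(n:ℝ))^n))
    (hβ : ∀ n : ℕ, 2 ≤ n →
      β n = (n:ℝ) * (Real.exp 1 * (1 - 1/(n:ℝ))^(n-1) - 1) /
        (1 - (1 - 1/(n:ℝ))^n - (1/(n:ℝ))^n)) :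
    (∀ n : ℕ, 3 ≤ n → 0 < a n ∧ a n < 1/2 ∧ 0 < β n ∧ β n < 1) := by
  intro n hn
  have hn2 : 2 ≤ n := by omega
  obtain ⟨hp_lb, hp_ub, hp_lb2⟩ := p_est n hn2
  have hhalf := p_le_half n hn2
  have hm3 : (3:ℝ) ≤ (n:ℝ) := by exact_mod_cast hn
  set m := (n:ℝ) with hmdef
  clear_value m
  have hm0 : (0:ℝ) < m := by linarith
  have hq0 : (0:ℝ) < 1/m := by positivity
  have hq3 : 1/m ≤ 1/3 := by
    rw [div_le_div_iff₀ hm0 (by norm_num)]; linarith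
  have hx0 : (0:ℝ) < 1 - 1/m := by linarith
  have hpp0 : 0 < (1 - 1/m)^(n-1) := pow_pos hx0 _
  have hxn0 : (1 - 1/m)^n = (1 - 1/m) * (1 - 1/m)^(n-1) := by
    conv_lhs => rw [show n = (n-1)+1 by omega]
    rw [pow_succ']
  obtain ⟨p, hpdef⟩ : ∃ p, (1 - 1/m)^(n-1) = p := ⟨_, rfl⟩
  rw [hpdef] at hp_lb hp_ub hp_lb2 hhalf hpp0 hxn0
  have hpp : 0 < p := hpp0
  have hxn : (1 - 1/m)^n = (1 - 1/m) * p := hxn0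
  have hqn0' : (0:ℝ) < (1/m)^n := pow_pos hq0 _
  have hqn3' : (1/m)^n ≤ (1/m)^3 :=
    pow_le_pow_of_le_one (by positivity) (by linarith) hn
  have hq31 : (1/m)^3 ≤ (1/m) * (1/9) := by
    have h2 : (1/m)^2 ≤ (1/3)^2 := by
      apply pow_le_pow_left₀ (by positivity) hq3
    nlinarith
  have hqn27 : (1/m)^n ≤ 1/27 := by nlinarith
  obtain ⟨qn, hqndef⟩ : ∃ q, (1/m)^n = q := ⟨_, rfl⟩
  rw [hqndef] at hqn27 hqn0' hqn3'
  have hqn0 : 0 < qn := hqn0'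
  have hqn3 : qn ≤ (1/m)^3 := hqn3'
  have hD : 0 < 1 - (1 - 1/m)^n - qn := by
    rw [hxn]
    have h1 : (1 - 1/m) * p ≤ p := by nlinarith
    linarith
  rw [hxn] at hD
  have haf := ha n hn2
  have hβf := hβ n hn2
  rw [← hmdef, hpdef, hqndef, hxn] at haf hβf
  refine ⟨?_, ?_, ?_, ?_⟩
  · -- 0 < a n
    rw [haf]
    have hlt : p / (1 - (1 - 1/m) * p - qn) < 1 := by
      rw [div_lt_one hD]
      have h1 : p * (2 - 1/m) ≤ (1/2) * (2 - 1/m) :=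
        mul_le_mul_of_nonneg_right hhalf (by linarith)
      nlinarith
    linarith
  · -- a n < 1/2
    by_cases h3 : n = 3
    · subst h3
      rw [ha 3 (by norm_num)]
      norm_num
    · have hm4 : (4:ℝ) ≤ m := by
        rw [hmdef]; exact_mod_cast (by omega : 4 ≤ n)
      have hq4 : 1/m ≤ 1/4 := by
        rw [div_le_div_iff₀ hm0 (by norm_num)]; linarith
      rw [haf]
      have hkey : 1 - (1 - 1/m) * p - qn < 2 * p := by
        have hprod : Real.exp 1 * Real.exp (-1) = 1 := by
          rw [← Real.exp_add]; norm_num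
        have h275 : Real.exp 1 < 11/4 :=
          lt_trans Real.exp_one_lt_d9 (by norm_num)
        have hEi : (4:ℝ)/11 < Real.exp (-1) := by
          rw [Real.exp_neg]
          have h := one_div_lt_one_div_of_lt (Real.exp_pos 1) h275
          rw [one_div] at h
          norm_num at h ⊢
          linarith
        have hA : Real.exp (-1) * (3 - 1/m) < p * (3 - 1/m) :=
          mul_lt_mul_of_pos_right hp_lb (by linarith)
        have hB : Real.exp (-1) * (11/4) ≤ Real.exp (-1) * (3 - 1/m) :=
          mul_le_mul_of_nonneg_left (by linarith) (Real.exp_pos (-1)).le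
        have hC : 1 < Real.exp (-1) * (11/4) := by nlinarith [hEi]
        nlinarith
      have : 1/2 < p / (1 - (1 - 1/m) * p - qn) := by
        rw [lt_div_iff₀ hD]; linarith
      linarith
  · -- 0 < β n
    rw [hβf]
    apply div_pos _ hD
    apply mul_pos hm0
    have h1 : Real.exp 1 * Real.exp (-1) < Real.exp 1 * p :=
      mul_lt_mul_of_pos_left hp_lb (Real.exp_pos 1)
    have h2 : Real.exp 1 * Real.exp (-1) = 1 := by
      rw [← Real.exp_add]; norm_num
    linarith
  · -- β n < 1
    by_cases hn8 : n ≤ 8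
    · clear haf hβf hD hxn hxn0 hpdef hqndef
      interval_cases n <;>
        · rw [hβ _ (by norm_num)]
          push_cast
          rw [div_lt_one (by norm_num)]
          nlinarith [Real.exp_one_lt_d9]
    · have hm9 : (9:ℝ) ≤ m := by
        rw [hmdef]; exact_mod_cast (by omega : 9 ≤ n)
      rw [hβf, div_lt_one hD]
      obtain ⟨E, hEdef⟩ : ∃ E, Real.exp 1 = E := ⟨_, rfl⟩
      rw [hEdef]
      obtain ⟨s, hsdef⟩ : ∃ s, 1/(2*(m-1)) = s := ⟨_, rfl⟩
      have hs0 : 0 < s := by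
        rw [← hsdef]; exact div_pos one_pos (by linarith)
      have hs16 : s ≤ 1/16 := by
        rw [← hsdef, div_le_div_iff₀ (by linarith) (by norm_num)]; linarith
      have hsplit : Real.exp (-1 + 1/(2*(m-1))) = Real.exp (-1) * Real.exp s := by
        rw [← Real.exp_add, hsdef]
      rw [hsplit] at hp_ub
      have hexp_s := exp_lt_inv_one_sub hs0 (by linarith : s < 1)
      have h1 : Real.exp s * (1-s) < 1 := by
        have := mul_lt_mul_of_pos_right hexp_s (by linarith : (0:ℝ) < 1-s)
        rwa [div_mul_cancel₀ 1 (by linarith : (1:ℝ)-s ≠ 0)] at this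
      have h2 : p * (1-s) < Real.exp (-1) := by
        calc p * (1-s) < (Real.exp (-1) * Real.exp s) * (1-s) :=
              mul_lt_mul_of_pos_right hp_ub (by linarith)
          _ = Real.exp (-1) * (Real.exp s * (1-s)) := by ring
          _ < Real.exp (-1) * 1 := mul_lt_mul_of_pos_left h1 (Real.exp_pos _)
          _ = Real.exp (-1) := mul_one _
      have hEpos : 0 < E := hEdef ▸ Real.exp_pos 1
      have hprodE : Real.exp (-1) * E = 1 := by
        rw [← hEdef, ← Real.exp_add]; norm_num
      have hpE : p * (1-s) * E < 1 := by
        calc p * (1-s) * E < Real.exp (-1) * E :=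
              mul_lt_mul_of_pos_right h2 hEpos
          _ = 1 := hprodE
      have hpE_pos : 0 < p * E := mul_pos hpp hEpos
      have hpE_lt : p * E < 1/(1-s) := by
        rw [lt_div_iff₀ (by linarith : (0:ℝ) < 1-s)]
        nlinarith
      have h1s : (15:ℝ)/16 ≤ 1 - s := by linarith
      have hpE_le : p * E < 16/15 := by
        have h := one_div_le_one_div_of_le (by norm_num : (0:ℝ) < 15/16) h1s
        calc p * E < 1/(1-s) := hpE_lt
          _ ≤ 1/(15/16) := h
          _ = 16/15 := by norm_num
      have hms : m * s = 1/2 + s := by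
        have hs1 : s * (2*(m-1)) = 1 := by
          rw [← hsdef]
          exact div_mul_cancel₀ 1 (ne_of_gt (by linarith : (0:ℝ) < 2*(m-1)))
        linear_combination (1/2) * hs1
      have hE_lb : (2.7182818283:ℝ) < E := hEdef ▸ Real.exp_one_gt_d9
      have hqn729 : qn ≤ 1/729 := by
        have : (1/m)^3 ≤ (1/9)^3 := pow_le_pow_left₀ (by positivity)
          (by rw [div_le_div_iff₀ hm0 (by norm_num)]; linarith) 3
        nlinarith
      have hms_pE : (m*s)*(p*E) = (1/2+s)*(p*E) := by rw [hms]
      have c1 : m * (E * p) - m < (1/2 + s) * (p * E) := by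
        linarith [mul_lt_mul_of_pos_left hpE hm0, hms_pE]
      have c2 : (1/2 + s) * (p * E) ≤ 3/5 := by
        have h_a : (0:ℝ) ≤ (1/16 - s) * (p*E) :=
          mul_nonneg (by linarith) hpE_pos.le
        linarith [h_a, hpE_le]
      have c3 : p < 0.3925 := by
        linarith [mul_lt_mul_of_pos_left hE_lb hpp, hpE_le]
      have c4 : (1 - 1/m) * p ≤ p := by
        linarith [mul_nonneg hpp.le hq0.le]
      linarith [c1, c2, c3, c4, hqn729, hqn0]


lemma coeff_aux_limits (a β : ℕ → ℝ)
    (ha : ∀ n : ℕ, 2 ≤ n →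
      a n = 1 - (1 - 1/(n:ℝ))^(n-1) / (1 - (1 - 1/(n:ℝ))^n - (1/(n:ℝ))^n))
    (hβ : ∀ n : ℕ, 2 ≤ n →
      β n = (n:ℝ) * (Real.exp 1 * (1 - 1/(n:ℝ))^(n-1) - 1) /
        (1 - (1 - 1/(n:ℝ))^n - (1/(n:ℝ))^n)) :
    Tendsto a atTop (𝓝 ((Real.exp 1 - 2) / (Real.exp 1 - 1))) ∧
    Tendsto β atTop (𝓝 (Real.exp 1 / (2 * (Real.exp 1 - 1)))) := by
  have hinvm : Tendsto (fun n : ℕ => 1/(n:ℝ)) atTop (𝓝 0) :=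
    tendsto_one_div_atTop_nhds_zero_nat
  have hm1 : Tendsto (fun n : ℕ => (n:ℝ) - 1) atTop atTop := by
    exact (tendsto_atTop_add_const_right atTop (-1) tendsto_natCast_atTop_atTop).congr fun n => by ring
  have hs_lim : Tendsto (fun n : ℕ => 1/(2*((n:ℝ)-1))) atTop (𝓝 0) := by
    have h := (hm1.const_mul_atTop (by norm_num : (0:ℝ) < 2)).inv_tendsto_atTop
    exact h.congr fun n => (one_div _).symm
  have ht_lim : Tendsto (fun n : ℕ => 1/(3*((n:ℝ)-1)^2)) atTop (𝓝 0) := by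
    have h2 : Tendsto (fun n : ℕ => 3*(((n:ℝ)-1)*((n:ℝ)-1))) atTop atTop :=
      (hm1.atTop_mul_atTop₀ hm1).const_mul_atTop (by norm_num)
    exact h2.inv_tendsto_atTop.congr fun n => by rw [pow_two]; exact (one_div _).symm
  -- limit of p
  have hub_lim : Tendsto (fun n : ℕ => Real.exp (-1 + 1/(2*((n:ℝ)-1)))) atTop
      (𝓝 (Real.exp (-1))) := by
    have := (Real.continuous_exp.tendsto (-1 + 0)).comp (tendsto_const_nhds.add hs_lim)
    simpa [Function.comp_def] using this
  have hplim : Tendsto (fun n : ℕ => (1 - 1/(n:ℝ))^(n-1)) atTop (𝓝 (Real.exp (-1))) := by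
    apply tendsto_of_tendsto_of_tendsto_of_le_of_le' tendsto_const_nhds hub_lim
    · filter_upwards [eventually_ge_atTop 2] with n hn
      exact (p_est n hn).1.le
    · filter_upwards [eventually_ge_atTop 2] with n hn
      exact (p_est n hn).2.1.le
  have hbase1 : Tendsto (fun n : ℕ => 1 - 1/(n:ℝ)) atTop (𝓝 1) := by
    simpa using tendsto_const_nhds.sub hinvm
  have hxnlim : Tendsto (fun n : ℕ => (1 - 1/(n:ℝ))^n) atTop (𝓝 (Real.exp (-1))) := by
    have h := hbase1.mul hplim
    rw [one_mul] at h
    refine Tendsto.congr' ?_ h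
    filter_upwards [eventually_ge_atTop 1] with n hn
    have he : (1 - 1/(n:ℝ))^n = (1 - 1/(n:ℝ))^(n-1+1) := by congr 1; omega
    rw [he, pow_succ']
  have hqlim : Tendsto (fun n : ℕ => (1/(n:ℝ))^n) atTop (𝓝 0) := by
    apply tendsto_of_tendsto_of_tendsto_of_le_of_le' tendsto_const_nhds hinvm
    · filter_upwards [eventually_ge_atTop 1] with n hn
      positivity
    · filter_upwards [eventually_ge_atTop 1] with n hn
      have hm1' : (1:ℝ) ≤ (n:ℝ) := by exact_mod_cast hn
      have := pow_le_pow_of_le_one (by positivity : (0:ℝ) ≤ 1/(n:ℝ))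
        (by rw [div_le_one (by linarith)]; linarith) hn
      simpa using this
  have hDlim : Tendsto (fun n : ℕ => 1 - (1 - 1/(n:ℝ))^n - (1/(n:ℝ))^n) atTop
      (𝓝 (1 - Real.exp (-1) - 0)) := (tendsto_const_nhds.sub hxnlim).sub hqlim
  have hexpm1 : Real.exp (-1) < 1 := by
    have := Real.exp_lt_exp.2 (show (-1:ℝ) < 0 by norm_num)
    rwa [Real.exp_zero] at this
  have hDne : 1 - Real.exp (-1) - 0 ≠ 0 := by
    have := Real.exp_pos (-1); intro h; linarith
  have hE1 : (1:ℝ) < Real.exp 1 := by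
    have := Real.exp_one_gt_d9; linarith
  have hEne : Real.exp 1 ≠ 0 := (Real.exp_pos 1).ne'
  constructor
  · -- limit of a
    have h1 : Tendsto (fun n : ℕ =>
        1 - (1 - 1/(n:ℝ))^(n-1) / (1 - (1 - 1/(n:ℝ))^n - (1/(n:ℝ))^n)) atTop
        (𝓝 (1 - Real.exp (-1) / (1 - Real.exp (-1) - 0))) :=
      tendsto_const_nhds.sub (hplim.div hDlim hDne)
    have hval : (Real.exp 1 - 2) / (Real.exp 1 - 1)
        = 1 - Real.exp (-1) / (1 - Real.exp (-1) - 0) := by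
      rw [Real.exp_neg]
      rw [sub_zero]
      have h2 : 1 - (Real.exp 1)⁻¹ ≠ 0 := by
        rw [sub_ne_zero]
        intro h
        have : Real.exp 1 * 1 = Real.exp 1 * (Real.exp 1)⁻¹ := by rw [← h]
        rw [mul_inv_cancel₀ hEne, mul_one] at this
        linarith
      have h3 : Real.exp 1 - 1 ≠ 0 := by intro h; linarith
      field_simp
      ring
    rw [hval]
    refine Tendsto.congr' ?_ h1
    filter_upwards [eventually_ge_atTop 2] with n hn
    exact (ha n hn).symm
  · -- limit of β
    have hL1 : Tendsto (fun n : ℕ => (n:ℝ)/(2*((n:ℝ)-1))) atTop (𝓝 (1/2)) := by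
      have hbase : Tendsto (fun n : ℕ => 2 - 2*(1/(n:ℝ))) atTop (𝓝 2) := by
        simpa using tendsto_const_nhds.sub (hinvm.const_mul 2)
      have h := (tendsto_const_nhds (α := ℕ) (f := atTop) (x := (1:ℝ))).div hbase (by norm_num)
      refine Tendsto.congr' ?_ h
      filter_upwards [eventually_ge_atTop 2] with n hn
      have hm : (2:ℝ) ≤ (n:ℝ) := by exact_mod_cast hn
      have h0 : (n:ℝ) ≠ 0 := by linarith
      have hhalf : 1/(n:ℝ) ≤ 1/2 := by
        rw [div_le_div_iff₀ (by linarith) (by norm_num)]; linarith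
      show 1/(2 - 2*(1/(n:ℝ))) = (n:ℝ)/(2*((n:ℝ)-1))
      rw [div_eq_div_iff (by intro h; linarith) (by intro h; nlinarith)]
      field_simp
    have hL2 : Tendsto (fun n : ℕ => (n:ℝ)/(3*((n:ℝ)-1)^2)) atTop (𝓝 0) := by
      have hbase : Tendsto (fun n : ℕ => 3*(1 - 1/(n:ℝ))^2) atTop (𝓝 3) := by
        have := ((hbase1.pow 2).const_mul 3)
        simpa using this
      have h := hinvm.div hbase (by norm_num)
      have h0 : (0:ℝ)/3 = 0 := by norm_num
      rw [h0] at h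
      refine Tendsto.congr' ?_ h
      filter_upwards [eventually_ge_atTop 2] with n hn
      have hm : (2:ℝ) ≤ (n:ℝ) := by exact_mod_cast hn
      have hn0 : (n:ℝ) ≠ 0 := by linarith
      have hhalf : 1/(n:ℝ) ≤ 1/2 := by
        rw [div_le_div_iff₀ (by linarith) (by norm_num)]; linarith
      show (1/(n:ℝ))/(3*(1 - 1/(n:ℝ))^2) = (n:ℝ)/(3*((n:ℝ)-1)^2)
      rw [div_eq_div_iff (by nlinarith) (by nlinarith)]
      field_simp
    have hLlim : Tendsto (fun n : ℕ =>
        (n:ℝ) * (1/(2*((n:ℝ)-1)) - 1/(3*((n:ℝ)-1)^2))) atTop (𝓝 (1/2)) := by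
      have h := hL1.sub hL2
      rw [sub_zero] at h
      exact h.congr fun n => by ring
    have hUlim : Tendsto (fun n : ℕ => (n:ℝ)/(2*(n:ℝ)-3)) atTop (𝓝 (1/2)) := by
      have hbase : Tendsto (fun n : ℕ => 2 - 3*(1/(n:ℝ))) atTop (𝓝 2) := by
        simpa using tendsto_const_nhds.sub (hinvm.const_mul 3)
      have h := (tendsto_const_nhds (α := ℕ) (f := atTop) (x := (1:ℝ))).div hbase (by norm_num)
      refine Tendsto.congr' ?_ h
      filter_upwards [eventually_ge_atTop 2] with n hn
      have hm : (2:ℝ) ≤ (n:ℝ) := by exact_mod_cast hn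
      have hn0 : (n:ℝ) ≠ 0 := by linarith
      have hhalf : 1/(n:ℝ) ≤ 1/2 := by
        rw [div_le_div_iff₀ (by linarith) (by norm_num)]; linarith
      show 1/(2 - 3*(1/(n:ℝ))) = (n:ℝ)/(2*(n:ℝ)-3)
      rw [div_eq_div_iff (by intro h; linarith) (by intro h; nlinarith)]
      field_simp
    have hNlim : Tendsto (fun n : ℕ =>
        (n:ℝ) * (Real.exp 1 * (1 - 1/(n:ℝ))^(n-1) - 1)) atTop (𝓝 (1/2)) := by
      apply tendsto_of_tendsto_of_tendsto_of_le_of_le' hLlim hUlim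
      · filter_upwards [eventually_ge_atTop 3] with n hn
        have hm3 : (3:ℝ) ≤ (n:ℝ) := by exact_mod_cast hn
        obtain ⟨-, -, hlb2⟩ := p_est n (by omega)
        have h1 := mul_lt_mul_of_pos_left hlb2 (Real.exp_pos 1)
        rw [← Real.exp_add] at h1
        rw [show 1 + (-1 + 1/(2*((n:ℝ)-1)) - 1/(3*((n:ℝ)-1)^2))
            = 1/(2*((n:ℝ)-1)) - 1/(3*((n:ℝ)-1)^2) by ring] at h1
        have h2 := Real.add_one_le_exp (1/(2*((n:ℝ)-1)) - 1/(3*((n:ℝ)-1)^2))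
        have h3 : 1/(2*((n:ℝ)-1)) - 1/(3*((n:ℝ)-1)^2)
            ≤ Real.exp 1 * (1 - 1/(n:ℝ))^(n-1) - 1 := by linarith
        have := mul_le_mul_of_nonneg_left h3 (by linarith : (0:ℝ) ≤ (n:ℝ))
        linarith
      · filter_upwards [eventually_ge_atTop 3] with n hn
        have hm3 : (3:ℝ) ≤ (n:ℝ) := by exact_mod_cast hn
        obtain ⟨-, hub, -⟩ := p_est n (by omega)
        have hs0 : (0:ℝ) < 1/(2*((n:ℝ)-1)) := by
          apply div_pos one_pos; linarith
        have hs4 : 1/(2*((n:ℝ)-1)) ≤ 1/4 := by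
          rw [div_le_div_iff₀ (by linarith) (by norm_num)]; linarith
        have h1 := mul_lt_mul_of_pos_left hub (Real.exp_pos 1)
        rw [← Real.exp_add] at h1
        rw [show 1 + (-1 + 1/(2*((n:ℝ)-1))) = 1/(2*((n:ℝ)-1)) by ring] at h1
        have h2 := exp_lt_inv_one_sub hs0 (by linarith)
        have hd1 : 1 - 1/(2*((n:ℝ)-1)) ≠ 0 := by intro h; linarith
        have hd2 : 2*(n:ℝ) - 3 ≠ 0 := by intro h; nlinarith
        have heq : (1/(2*((n:ℝ)-1)))/(1 - 1/(2*((n:ℝ)-1))) = 1/(2*(n:ℝ)-3) := by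
          rw [div_eq_div_iff hd1 hd2]
          have hn1 : (n:ℝ) - 1 ≠ 0 := by intro h; nlinarith
          field_simp
          ring
        have h4 : 1/(1 - 1/(2*((n:ℝ)-1))) - 1
            = (1/(2*((n:ℝ)-1)))/(1 - 1/(2*((n:ℝ)-1))) := by
          rw [div_sub_one hd1]; congr 1; ring
        have h3 : Real.exp 1 * (1 - 1/(n:ℝ))^(n-1) - 1 ≤ 1/(2*(n:ℝ)-3) := by
          rw [← heq, ← h4]; linarith
        have h5 := mul_le_mul_of_nonneg_left h3 (by linarith : (0:ℝ) ≤ (n:ℝ))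
        calc (n:ℝ) * (Real.exp 1 * (1 - 1/(n:ℝ))^(n-1) - 1)
            ≤ (n:ℝ) * (1/(2*(n:ℝ)-3)) := h5
          _ = (n:ℝ)/(2*(n:ℝ)-3) := by rw [mul_one_div]
    have hdiv := hNlim.div hDlim hDne
    have hval : Real.exp 1 / (2 * (Real.exp 1 - 1))
        = (1/2) / (1 - Real.exp (-1) - 0) := by
      rw [Real.exp_neg, sub_zero]
      have h2 : 1 - (Real.exp 1)⁻¹ ≠ 0 := by
        rw [sub_ne_zero]
        intro h
        have : Real.exp 1 * 1 = Real.exp 1 * (Real.exp 1)⁻¹ := by rw [← h]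
        rw [mul_inv_cancel₀ hEne, mul_one] at this
        linarith
      field_simp
    rw [hval]
    refine Tendsto.congr' ?_ hdiv
    filter_upwards [eventually_ge_atTop 2] with n hn
    exact (hβ n hn).symm

/-- properties of the coefficients a(n), β(n) of the recurrence
    Δ(n) = a(n)·Δ(n−1) + β(n)/n. -/
theorem coeffs_a_beta_properties
    (a β : ℕ → ℝ)
    (ha : ∀ n : ℕ, 2 ≤ n →
      a n = 1 - (1 - 1/(n:ℝ))^(n-1) / (1 - (1 - 1/(n:ℝ))^n - (1/(n:ℝ))^n))
    (hβ : ∀ n : ℕ, 2 ≤ n →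
      β n = (n:ℝ) * (Real.exp 1 * (1 - 1/(n:ℝ))^(n-1) - 1) /
        (1 - (1 - 1/(n:ℝ))^n - (1/(n:ℝ))^n)) :
    a 2 = 0 ∧
    (∀ n : ℕ, 3 ≤ n → 0 < a n ∧ a n < 1/2 ∧ 0 < β n ∧ β n < 1) ∧
    Tendsto a atTop (𝓝 ((Real.exp 1 - 2) / (Real.exp 1 - 1))) ∧
    Tendsto β atTop (𝓝 (Real.exp 1 / (2 * (Real.exp 1 - 1)))) := by
  refine ⟨?_, coeff_aux_bounds a β ha hβ,
    (coeff_aux_limits a β ha hβ).1, (coeff_aux_limits a β ha hβ).2⟩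
  rw [ha 2 (by norm_num)]
  norm_num
end

section
/- The sequence M(n) converges as n → ∞, and its limit M(∞) satisfies M(∞) = (1/(1−e^{−1}))·(1 + Σ_{k≥2} (e^{−1}/k!)·M(k)), where the sum is the (convergent) infinite series over all integers k ≥ 2. (Numerically M(∞) = 2.441715879….) -/
open Filter Topology Finset


noncomputable def bb (n k : ℕ) : ℝ := (n.choose k : ℝ) * (1/(n:ℝ))^k * (1 - 1/(n:ℝ))^(n-k)

lemma one_sub_nonneg {n : ℕ} (hn : 1 ≤ n) : (0:ℝ) ≤ 1 - 1/(n:ℝ) := by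
  have h1 : (1:ℝ) ≤ n := by exact_mod_cast hn
  rw [sub_nonneg, div_le_one (by linarith)]; linarith

lemma bb_nonneg {n : ℕ} (hn : 1 ≤ n) (k : ℕ) : 0 ≤ bb n k := by
  have h := one_sub_nonneg hn
  unfold bb; positivity

lemma bb_le {n : ℕ} (hn : 1 ≤ n) (k : ℕ) : bb n k ≤ 1 / (Nat.factorial k) := by
  have h1 : (1:ℝ) ≤ n := by exact_mod_cast hn
  have hn0 : (0:ℝ) < n := by linarith
  have hb : (0:ℝ) ≤ 1 - 1/n := one_sub_nonneg hn
  have hb1 : (1 - 1/(n:ℝ))^(n-k) ≤ 1 := by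
    apply pow_le_one₀ hb
    have : (0:ℝ) ≤ 1/(n:ℝ) := by positivity
    linarith
  have hc : (n.choose k : ℝ) * (1/(n:ℝ))^k ≤ 1 / (Nat.factorial k) := by
    have hd : (k.factorial * n.choose k : ℕ) ≤ n ^ k := by
      rw [← Nat.descFactorial_eq_factorial_mul_choose]
      exact Nat.descFactorial_le_pow n k
    have hd' : (k.factorial : ℝ) * (n.choose k) ≤ (n:ℝ)^k := by exact_mod_cast hd
    have hf : (0:ℝ) < k.factorial := by exact_mod_cast k.factorial_pos
    rw [one_div_pow, div_eq_mul_inv, one_mul, mul_inv_le_iff₀ (by positivity),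
      one_div, inv_mul_eq_div, le_div_iff₀ hf]
    nlinarith
  calc bb n k ≤ (n.choose k : ℝ) * (1/(n:ℝ))^k * 1 :=
        mul_le_mul_of_nonneg_left hb1 (by positivity)
    _ ≤ 1 / (Nat.factorial k) := by rw [mul_one]; exact hc

lemma bb_tendsto (j : ℕ) :
    Tendsto (fun n : ℕ => bb n j) atTop (𝓝 (Real.exp (-1) / j.factorial)) := by
  have hpow : Tendsto (fun n : ℕ => (1 - 1/(n:ℝ))^n) atTop (𝓝 (Real.exp (-1))) := by
    have h := Real.tendsto_one_add_div_pow_exp (-1)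
    exact h.congr fun n => by rw [neg_div, ← sub_eq_add_neg]
  have hinv : Tendsto (fun n : ℕ => 1/(n:ℝ)) atTop (𝓝 0) :=
    tendsto_one_div_atTop_nhds_zero_nat
  have hbase : Tendsto (fun n : ℕ => 1 - 1/(n:ℝ)) atTop (𝓝 1) := by
    simpa using tendsto_const_nhds.sub hinv
  have hpj : Tendsto (fun n : ℕ => (1 - 1/(n:ℝ))^j) atTop (𝓝 1) := by
    simpa using hbase.pow j
  have hprod : Tendsto (fun n : ℕ => ∏ i ∈ range j, (1 - (i:ℝ)/(n:ℝ))) atTop (𝓝 1) := by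
    have h : ∀ i ∈ range j, Tendsto (fun n : ℕ => 1 - (i:ℝ)/(n:ℝ)) atTop (𝓝 1) := by
      intro i _
      simpa using tendsto_const_nhds.sub (tendsto_const_div_atTop_nhds_zero_nat (i:ℝ))
    simpa using tendsto_finset_prod (range j) h
  have key : Tendsto (fun n : ℕ =>
      (∏ i ∈ range j, (1 - (i:ℝ)/n)) / (j.factorial : ℝ) *
        ((1 - 1/(n:ℝ))^n / (1 - 1/(n:ℝ))^j)) atTop (𝓝 (Real.exp (-1) / j.factorial)) := by
    have h := (hprod.div_const (j.factorial : ℝ)).mul (hpow.div hpj one_ne_zero)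
    convert h using 2
    · rfl
    · rw [div_one, one_div_mul_eq_div]
  refine Tendsto.congr' ?_ key
  filter_upwards [eventually_ge_atTop (j+2)] with n hn
  have hjn : j ≤ n := by omega
  have hn1 : (1:ℝ) ≤ n := by exact_mod_cast Nat.one_le_iff_ne_zero.2 (by omega)
  have hn2 : (2:ℝ) ≤ n := by exact_mod_cast (by omega : 2 ≤ n)
  have hn0 : (0:ℝ) < n := by linarith
  have hpos : (0:ℝ) < 1 - 1/(n:ℝ) := by
    rw [sub_pos, div_lt_one hn0]; linarith
  have hdesc : (n.choose j : ℝ) = (∏ i ∈ range j, ((n:ℝ) - i)) / (j.factorial : ℝ) := by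
    have h1 : ((n.descFactorial j : ℕ) : ℝ) = (j.factorial : ℝ) * (n.choose j : ℝ) := by
      exact_mod_cast congrArg (Nat.cast (R := ℝ)) (Nat.descFactorial_eq_factorial_mul_choose n j)
    have h2 : ((n.descFactorial j : ℕ) : ℝ) = ∏ i ∈ range j, ((n:ℝ) - i) := by
      rw [Nat.descFactorial_eq_prod_range, Nat.cast_prod]
      refine Finset.prod_congr rfl fun i hi => ?_
      have : i ≤ n := le_of_lt (lt_of_lt_of_le (mem_range.1 hi) hjn)
      push_cast [Nat.cast_sub this]
      ring
    rw [eq_div_iff (by exact_mod_cast j.factorial_ne_zero)]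
    rw [h1] at h2; linarith [h2]
  have hprodeq : ∏ i ∈ range j, (1 - (i:ℝ)/n) =
      (∏ i ∈ range j, ((n:ℝ) - i)) * (1/(n:ℝ))^j := by
    have h3 : (∏ i ∈ range j, ((n:ℝ) - i)) * (1/(n:ℝ))^j =
        ∏ i ∈ range j, (((n:ℝ) - i) * (1/(n:ℝ))) := by
      rw [Finset.prod_mul_distrib, Finset.prod_const, Finset.card_range]
    rw [h3]
    refine Finset.prod_congr rfl fun i hi => ?_
    field_simp
  show _ = bb n j
  unfold bb
  rw [hdesc, hprodeq, pow_sub₀ _ (ne_of_gt hpos) hjn]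
  ring

lemma bb_sum {n : ℕ} (hn : 1 ≤ n) : ∑ k ∈ range (n+1), bb n k = 1 := by
  have hn0 : ((n:ℝ)) ≠ 0 := by
    have : (1:ℝ) ≤ n := by exact_mod_cast hn
    linarith
  have h := add_pow (1/(n:ℝ)) (1 - 1/(n:ℝ)) n
  have h1 : (1/(n:ℝ) + (1 - 1/(n:ℝ))) = 1 := by ring
  rw [h1, one_pow] at h
  rw [h]
  refine Finset.sum_congr rfl fun k _ => ?_
  unfold bb; ring

lemma exp_le_pow_aux (m : ℕ) : Real.exp (-1) ≤ (1 - 1/((m:ℝ)+2))^(m+1) := by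
  have hm0 : (0:ℝ) < (m:ℝ)+1 := by positivity
  have hm2 : (0:ℝ) < (m:ℝ)+2 := by positivity
  have h2 : (0:ℝ) < 1 - 1/((m:ℝ)+2) := by
    rw [sub_pos, div_lt_one hm2]; linarith
  have h1 : Real.exp (-(1/((m:ℝ)+1))) ≤ 1 - 1/((m:ℝ)+2) := by
    rw [Real.exp_neg, inv_le_comm₀ (Real.exp_pos _) h2]
    have hc : (1 - 1/((m:ℝ)+2))⁻¹ = 1/((m:ℝ)+1) + 1 := by
      rw [inv_eq_one_div, eq_comm]
      rw [eq_div_iff (ne_of_gt h2)]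
      field_simp
      ring
    rw [hc]
    exact Real.add_one_le_exp _
  calc Real.exp (-1) = (Real.exp (-(1/((m:ℝ)+1))))^(m+1) := by
        rw [← Real.exp_nat_mul]; congr 1; push_cast; field_simp
    _ ≤ (1 - 1/((m:ℝ)+2))^(m+1) := pow_le_pow_left₀ (Real.exp_pos _).le h1 _

lemma M_bounds (M : ℕ → ℝ) (hM1 : M 1 = 0)
    (hM : ∀ n : ℕ, 2 ≤ n →
      M n = 1 + (1 - 1/(n:ℝ))^n * M n +
        ∑ k ∈ Finset.Icc 2 n,
          (n.choose k : ℝ) * (1/(n:ℝ))^k * (1 - 1/(n:ℝ))^(n-k) * M k) :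
    ∀ n : ℕ, 1 ≤ n → 0 ≤ M n ∧ M n ≤ Real.exp 1 := by
  intro n
  induction n using Nat.strong_induction_on with
  | _ n ih =>
  intro hn
  rcases eq_or_lt_of_le hn with h1 | h2
  · rw [← h1, hM1]
    exact ⟨le_refl 0, (Real.exp_pos 1).le⟩
  · obtain ⟨m, rfl⟩ : ∃ m, n = m + 2 := ⟨n - 2, by omega⟩
    have hNge : (2:ℝ) ≤ ((m+2:ℕ):ℝ) := by exact_mod_cast (by omega : 2 ≤ m+2)
    have hN0 : (0:ℝ) < ((m+2:ℕ):ℝ) := by linarith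
    have hinv1 : 1/((m+2:ℕ):ℝ) < 1 := by rw [div_lt_one hN0]; linarith
    have hinvpos : 0 < 1/((m+2:ℕ):ℝ) := by positivity
    have hbse : (0:ℝ) ≤ 1 - 1/((m+2:ℕ):ℝ) := by linarith
    set q := (1 - 1/((m+2:ℕ):ℝ))^(m+2) with hq
    set r := (1/((m+2:ℕ):ℝ))^(m+2) with hr
    have hrec : M (m+2) = 1 + q * M (m+2) + ∑ k ∈ Finset.Icc 2 (m+2), bb (m+2) k * M k :=
      hM (m+2) (by omega)
    have hsplit : ∑ k ∈ Finset.Icc 2 (m+2), bb (m+2) k * M k =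
        (∑ k ∈ Finset.Icc 2 (m+1), bb (m+2) k * M k) + bb (m+2) (m+2) * M (m+2) :=
      Finset.sum_Icc_succ_top (by omega) _
    have hbnn : bb (m+2) (m+2) = r := by
      unfold bb; simp [Nat.choose_self, Nat.sub_self, hr]
    set S := ∑ k ∈ Finset.Icc 2 (m+1), bb (m+2) k * M k with hS
    have hrec2 : M (m+2) = 1 + q * M (m+2) + (S + r * M (m+2)) := by
      rw [hsplit, hbnn] at hrec
      linarith [hrec]
    -- positivity of denominator
    have hqle : q ≤ 1 - 1/((m+2:ℕ):ℝ) := pow_le_of_le_one hbse (by linarith) (by omega)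
    have hrlt : r < 1/((m+2:ℕ):ℝ) := by
      have h1 : r ≤ (1/((m+2:ℕ):ℝ))^2 :=
        pow_le_pow_of_le_one hinvpos.le hinv1.le (by omega)
      nlinarith
    have hD : 0 < 1 - q - r := by nlinarith
    have hMN : M (m+2) = (1 + S) / (1 - q - r) := by
      rw [eq_div_iff (ne_of_gt hD)]
      linear_combination hrec2
    -- S is nonneg and bounded
    have hMk : ∀ k ∈ Finset.Icc 2 (m+1), 0 ≤ M k ∧ M k ≤ Real.exp 1 := by
      intro k hk
      rw [Finset.mem_Icc] at hk
      exact ih k (by omega) (by omega)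
    have hSnonneg : 0 ≤ S := by
      apply Finset.sum_nonneg
      intro k hk
      exact mul_nonneg (bb_nonneg (by omega) k) (hMk k hk).1
    constructor
    · rw [hMN]
      exact div_nonneg (by linarith) hD.le
    · -- upper bound
      have hsum1 : ∑ k ∈ range (m+2+1), bb (m+2) k = 1 := bb_sum (by omega)
      have hdecomp : ∑ k ∈ range (m+2+1), bb (m+2) k =
          bb (m+2) 0 + (bb (m+2) 1 + (bb (m+2) (m+2) + ∑ k ∈ Finset.Icc 2 (m+1), bb (m+2) k)) := by
        have hins : range (m+2+1) = insert 0 (insert 1 (insert (m+2) (Finset.Icc 2 (m+1)))) := by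
          ext x; simp only [mem_range, mem_insert, Finset.mem_Icc]; omega
        rw [hins, Finset.sum_insert (by simp only [mem_insert, Finset.mem_Icc]; omega),
          Finset.sum_insert (by simp only [mem_insert, Finset.mem_Icc]; omega),
          Finset.sum_insert (by simp only [Finset.mem_Icc]; omega)]
      have hb0 : bb (m+2) 0 = q := by unfold bb; simp [hq]
      have hb1 : Real.exp (-1) ≤ bb (m+2) 1 := by
        have he : bb (m+2) 1 = (1 - 1/((m+2:ℕ):ℝ))^(m+1) := by
          unfold bb
          rw [Nat.choose_one_right]
          have : (m+2) - 1 = m+1 := by omega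
          rw [this, pow_one]
          field_simp
        rw [he]
        have hc : ((m+2:ℕ):ℝ) = (m:ℝ)+2 := by push_cast; ring
        rw [hc]
        exact exp_le_pow_aux m
      have hSle : S ≤ (1 - q - r - bb (m+2) 1) * Real.exp 1 := by
        have h1 : S ≤ (∑ k ∈ Finset.Icc 2 (m+1), bb (m+2) k) * Real.exp 1 := by
          rw [Finset.sum_mul]
          apply Finset.sum_le_sum
          intro k hk
          exact mul_le_mul_of_nonneg_left (hMk k hk).2 (bb_nonneg (by omega) k)
        have h2 : (∑ k ∈ Finset.Icc 2 (m+1), bb (m+2) k) = 1 - q - r - bb (m+2) 1 := by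
          rw [hdecomp, hb0, hbnn] at hsum1; linarith
        rw [h2] at h1; exact h1
      have hone : 1 ≤ Real.exp 1 * bb (m+2) 1 := by
        have h3 := mul_le_mul_of_nonneg_left hb1 (Real.exp_pos 1).le
        have h4 : Real.exp 1 * Real.exp (-1) = 1 := by
          rw [← Real.exp_add]; norm_num
        linarith
      rw [hMN, div_le_iff₀ hD]
      nlinarith [Real.exp_pos 1]
lemma one_sub_pow_tendsto :
    Tendsto (fun n : ℕ => (1 - 1/(n:ℝ))^n) atTop (𝓝 (Real.exp (-1))) := by
  have h := Real.tendsto_one_add_div_pow_exp (-1)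
  exact h.congr fun n => by rw [neg_div, ← sub_eq_add_neg]


/-- M(n) converges, and its limit M(∞) equals
    (1/(1−e⁻¹))·(1 + Σ_{k≥2} (e⁻¹/k!)·M(k)). -/
theorem M_tendsto_Minfty
    (M : ℕ → ℝ)
    (hM1 : M 1 = 0)
    (hM : ∀ n : ℕ, 2 ≤ n →
      M n = 1 + (1 - 1/(n:ℝ))^n * M n +
        ∑ k ∈ Finset.Icc 2 n,
          (n.choose k : ℝ) * (1/(n:ℝ))^k * (1 - 1/(n:ℝ))^(n-k) * M k) :
    ∃ L : ℝ, Tendsto M atTop (𝓝 L) ∧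
      Summable (fun k : ℕ => Real.exp (-1) / (Nat.factorial (k+2)) * M (k+2)) ∧
      L = 1 / (1 - Real.exp (-1)) *
        (1 + ∑' k : ℕ, Real.exp (-1) / (Nat.factorial (k+2)) * M (k+2)) := by
  have hMb := M_bounds M hM1 hM
  have hexp1 : Real.exp (-1) * Real.exp 1 = 1 := by rw [← Real.exp_add]; norm_num
  have hbound : Summable (fun k : ℕ => 1 / (((k+2).factorial : ℕ) : ℝ)) := by
    have h := Real.summable_pow_div_factorial 1
    simp only [one_pow] at h
    exact h.comp_injective (add_left_injective 2)
  have hsummable : Summable (fun k : ℕ => Real.exp (-1) / (Nat.factorial (k+2)) * M (k+2)) := by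
    refine Summable.of_nonneg_of_le (fun k => ?_) (fun k => ?_) hbound
    · have := (hMb (k+2) (by omega)).1
      positivity
    · have h1 := (hMb (k+2) (by omega)).2
      have h2 : (0:ℝ) < ((k+2).factorial : ℝ) := by exact_mod_cast (k+2).factorial_pos
      rw [div_mul_eq_mul_div, div_le_div_iff₀ h2 h2]
      have : Real.exp (-1) * M (k+2) ≤ Real.exp (-1) * Real.exp 1 :=
        mul_le_mul_of_nonneg_left h1 (Real.exp_pos _).le
      nlinarith
  set S : ℝ := ∑' k : ℕ, Real.exp (-1) / (Nat.factorial (k+2)) * M (k+2) with hSdef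
  set g : ℕ → ℕ → ℝ := fun n k => if k + 2 ≤ n then bb n (k+2) * M (k+2) else 0 with hg
  have hT : Tendsto (fun n : ℕ => ∑' k, g n k) atTop (𝓝 S) := by
    refine tendsto_tsum_of_dominated_convergence
      (bound := fun k : ℕ => Real.exp 1 * (1 / (((k+2).factorial : ℕ) : ℝ)))
      (hbound.mul_left _) (fun k => ?_) ?_
    · refine Tendsto.congr' ?_ ((bb_tendsto (k+2)).mul_const (M (k+2)))
      filter_upwards [eventually_ge_atTop (k+2)] with n hn
      simp only [hg, if_pos hn]
    · refine Eventually.of_forall fun n k => ?_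
      by_cases h : k + 2 ≤ n
      · have hn1 : 1 ≤ n := by omega
        have h1 := bb_le hn1 (k+2)
        have h2 := bb_nonneg hn1 (k+2)
        have h3 := (hMb (k+2) (by omega)).1
        have h4 := (hMb (k+2) (by omega)).2
        simp only [hg, if_pos h, Real.norm_eq_abs, abs_of_nonneg (mul_nonneg h2 h3)]
        calc bb n (k+2) * M (k+2) ≤ (1 / (((k+2).factorial : ℕ) : ℝ)) * Real.exp 1 :=
              mul_le_mul h1 h4 h3 (by positivity)
          _ = Real.exp 1 * (1 / (((k+2).factorial : ℕ) : ℝ)) := by ring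
      · simp only [hg, if_neg h, norm_zero]
        positivity
  have hden : Tendsto (fun n : ℕ => 1 - (1 - 1/(n:ℝ))^n) atTop (𝓝 (1 - Real.exp (-1))) :=
    tendsto_const_nhds.sub one_sub_pow_tendsto
  have hne : 1 - Real.exp (-1) ≠ 0 := by
    have : Real.exp (-1) < 1 := Real.exp_lt_one_iff.2 (by norm_num)
    linarith
  have hmain : Tendsto (fun n : ℕ => (1 + ∑' k, g n k) / (1 - (1 - 1/(n:ℝ))^n)) atTop
      (𝓝 ((1 + S) / (1 - Real.exp (-1)))) :=
    (tendsto_const_nhds.add hT).div hden hne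
  have hMtendsto : Tendsto M atTop (𝓝 ((1 + S) / (1 - Real.exp (-1)))) := by
    refine Tendsto.congr' ?_ hmain
    filter_upwards [eventually_ge_atTop 2] with n hn
    have hn1 : (1:ℝ) ≤ n := by exact_mod_cast (by omega : 1 ≤ n)
    have htsum : ∑' k, g n k = ∑ k ∈ Finset.Icc 2 n, bb n k * M k := by
      rw [tsum_eq_sum (s := range (n-1)) (fun k hk => ?_)]
      · have hIcc : ∑ k ∈ Finset.Icc 2 n, bb n k * M k =
            ∑ k ∈ range (n+1-2), bb n (2+k) * M (2+k) := by
          rw [← Finset.Ico_add_one_right_eq_Icc, Finset.sum_Ico_eq_sum_range]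
        rw [hIcc]
        have hcard : n + 1 - 2 = n - 1 := by omega
        rw [hcard]
        refine Finset.sum_congr rfl fun k hk => ?_
        rw [mem_range] at hk
        have hk2 : k + 2 ≤ n := by omega
        simp only [hg, if_pos hk2]
        rw [Nat.add_comm 2 k]
      · rw [mem_range] at hk
        have : ¬ (k + 2 ≤ n) := by omega
        simp only [hg, if_neg this]
    have hq1 : (1 - 1/(n:ℝ))^n < 1 := by
      have hnpos : (0:ℝ) < n := by linarith
      have h0 : (0:ℝ) ≤ 1 - 1/(n:ℝ) := by
        rw [sub_nonneg, div_le_one hnpos]; linarith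
      have hip : (0:ℝ) < 1/(n:ℝ) := by positivity
      have h2 : (1 - 1/(n:ℝ))^n ≤ 1 - 1/(n:ℝ) :=
        pow_le_of_le_one h0 (by linarith) (by omega)
      linarith
    have hMn : M n = 1 + (1 - 1/(n:ℝ))^n * M n + ∑ k ∈ Finset.Icc 2 n, bb n k * M k :=
      hM n hn
    rw [htsum, div_eq_iff (by linarith : 1 - (1 - 1/(n:ℝ))^n ≠ 0)]
    linear_combination -hMn
  exact ⟨(1 + S) / (1 - Real.exp (-1)), hMtendsto, hsummable, by ring⟩
end

section
/- For every fixed integer k ≥ 0, the sequence n·(b(n,k) − e^{−1}/k!) converges as n → ∞ to −e^{−1}·(k² − 3k + 1)/(2·k!); that is, b(n,k) = (e^{−1}/k!)·(1 − (k²−3k+1)/(2n) + O(1/n²)). -/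
open Filter Topology

private lemma nat_mul_log (t : ℝ) :
    Tendsto (fun n : ℕ => (n:ℝ) * Real.log (1 + t / n)) atTop (𝓝 t) :=
  (Real.tendsto_mul_log_one_add_div_atTop t).comp tendsto_natCast_atTop_atTop

private lemma second_order :
    Tendsto (fun n : ℕ => (n:ℝ) * ((n:ℝ) * Real.log (1 - 1/(n:ℝ)) + 1)) atTop (𝓝 (-1/2)) := by
  set u : ℕ → ℝ := fun n => Real.log (1 - 1/(n:ℝ)) + 1/(n:ℝ) + 1/(2*(n:ℝ)^2) with hu
  have hbound : ∀ᶠ n : ℕ in atTop, ‖(n:ℝ)^2 * u n‖ ≤ 1/((n:ℝ) - 1) := by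
    filter_upwards [eventually_ge_atTop 2] with n hn
    have hn2 : (2:ℝ) ≤ (n:ℝ) := by exact_mod_cast hn
    have hn0 : (0:ℝ) < n := by linarith
    have hxlt : |1/(n:ℝ)| < 1 := by
      rw [abs_of_pos (by positivity)]
      rw [div_lt_one hn0]; linarith
    have key := Real.abs_log_sub_add_sum_range_le hxlt 2
    have hsum : (∑ i ∈ Finset.range 2, (1/(n:ℝ))^(i+1)/(i+1)) = 1/(n:ℝ) + 1/(2*(n:ℝ)^2) := by
      rw [Finset.sum_range_succ, Finset.sum_range_succ, Finset.sum_range_zero]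
      push_cast; ring
    rw [hsum] at key
    have hu_eq : |u n| ≤ |1/(n:ℝ)|^3 / (1 - |1/(n:ℝ)|) := by
      have : u n = (1/(n:ℝ) + 1/(2*(n:ℝ)^2)) + Real.log (1 - 1/(n:ℝ)) := by rw [hu]; ring
      rw [this]; exact key
    rw [norm_mul, norm_pow, Real.norm_eq_abs, Real.norm_eq_abs, abs_of_pos hn0]
    have h1 : |1/(n:ℝ)| = 1/(n:ℝ) := abs_of_pos (by positivity)
    rw [h1] at hu_eq
    calc (n:ℝ)^2 * |u n| ≤ (n:ℝ)^2 * ((1/(n:ℝ))^3 / (1 - 1/(n:ℝ))) := by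
          apply mul_le_mul_of_nonneg_left hu_eq (by positivity)
      _ = 1/((n:ℝ) - 1) := by
          have h3 : (1:ℝ) - 1/(n:ℝ) = ((n:ℝ) - 1)/(n:ℝ) := by field_simp
          have hn1 : (n:ℝ) - 1 ≠ 0 := by linarith
          have hnne : (n:ℝ) ≠ 0 := by positivity
          field_simp
  have hbnd0 : Tendsto (fun n : ℕ => 1/((n:ℝ) - 1)) atTop (𝓝 0) := by
    simp only [one_div]
    exact tendsto_inv_atTop_zero.comp
      (tendsto_atTop_add_const_right _ (-1) tendsto_natCast_atTop_atTop)
  have hu0 : Tendsto (fun n : ℕ => (n:ℝ)^2 * u n) atTop (𝓝 0) :=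
    squeeze_zero_norm' hbound hbnd0
  have heq : ∀ᶠ n : ℕ in atTop, (n:ℝ)^2 * u n - 1/2 = (n:ℝ) * ((n:ℝ) * Real.log (1 - 1/(n:ℝ)) + 1) := by
    filter_upwards [eventually_ge_atTop 1] with n hn
    have hn0 : (n:ℝ) ≠ 0 := by positivity
    rw [hu]; field_simp; ring
  have final := (hu0.sub_const (1/2)).congr' heq
  convert final using 2
  norm_num

private lemma log_part :
    Tendsto (fun n : ℕ => (n:ℝ) * Real.log (1 - 1/(n:ℝ))) atTop (𝓝 (-1)) := by
  have := nat_mul_log (-1)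
  simpa [neg_div, ← sub_eq_add_neg] using this

private lemma gauss_sum (m : ℕ) : (∑ i ∈ Finset.range m, (i:ℝ)) = m * (m - 1) / 2 := by
  induction m with
  | zero => simp
  | succ p ih => rw [Finset.sum_range_succ, ih]; push_cast; ring

private lemma nh_tendsto (k : ℕ) :
    Tendsto (fun n : ℕ => (n:ℝ) * (1 + (∑ i ∈ Finset.range k, Real.log (1 - (i:ℝ)/n)) +
        ((n - k : ℕ):ℝ) * Real.log (1 - 1/(n:ℝ)))) atTop
      (𝓝 (-((k:ℝ)^2 - 3*k + 1) / 2)) := by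
  have hA : Tendsto (fun n : ℕ => ∑ i ∈ Finset.range k, (n:ℝ) * Real.log (1 - (i:ℝ)/n)) atTop
      (𝓝 (∑ i ∈ Finset.range k, -(i:ℝ))) := by
    apply tendsto_finset_sum
    intro i _
    have := nat_mul_log (-(i:ℝ))
    simpa [neg_div, ← sub_eq_add_neg] using this
  have hcomb := hA.add (second_order.sub (log_part.const_mul (k:ℝ)))
  have heq : ∀ᶠ n : ℕ in atTop,
      (∑ i ∈ Finset.range k, (n:ℝ) * Real.log (1 - (i:ℝ)/n)) +
        ((n:ℝ) * ((n:ℝ) * Real.log (1 - 1/(n:ℝ)) + 1) - (k:ℝ) * ((n:ℝ) * Real.log (1 - 1/(n:ℝ))))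
      = (n:ℝ) * (1 + (∑ i ∈ Finset.range k, Real.log (1 - (i:ℝ)/n)) +
        ((n - k : ℕ):ℝ) * Real.log (1 - 1/(n:ℝ))) := by
    filter_upwards [eventually_ge_atTop k] with n hn
    rw [Nat.cast_sub hn, ← Finset.mul_sum]
    ring
  have hfin := hcomb.congr' heq
  have hval : (∑ i ∈ Finset.range k, -(i:ℝ)) + (-1/2 - (k:ℝ) * (-1))
      = -((k:ℝ)^2 - 3*k + 1) / 2 := by
    rw [Finset.sum_neg_distrib, gauss_sum]; ring
  rwa [hval] at hfin

/-- for fixed k, n·(b(n,k) − e⁻¹/k!) → −e⁻¹·(k²−3k+1)/(2·k!). -/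
theorem b_second_order_asymptotics (k : ℕ) :
    Tendsto (fun n : ℕ =>
        (n:ℝ) * ((n.choose k : ℝ) * (1/(n:ℝ))^k * (1 - 1/(n:ℝ))^(n-k) -
          Real.exp (-1) / (Nat.factorial k)))
      atTop
      (𝓝 (-(Real.exp (-1)) * ((k:ℝ)^2 - 3*(k:ℝ) + 1) / (2 * (Nat.factorial k)))) := by
  set h : ℕ → ℝ := fun n => 1 + (∑ i ∈ Finset.range k, Real.log (1 - (i:ℝ)/n)) +
      ((n - k : ℕ):ℝ) * Real.log (1 - 1/(n:ℝ)) with hh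
  set g : ℕ → ℝ := fun n => Real.exp 1 * (∏ i ∈ Finset.range k, (1 - (i:ℝ)/n)) *
      (1 - 1/(n:ℝ))^(n - k) with hg
  set L : ℝ := -((k:ℝ)^2 - 3*k + 1) / 2 with hL
  have hNH : Tendsto (fun n : ℕ => (n:ℝ) * h n) atTop (𝓝 L) := nh_tendsto k
  have hh0 : Tendsto h atTop (𝓝 0) := by
    have hm := hNH.mul tendsto_one_div_atTop_nhds_zero_nat
    rw [mul_zero] at hm
    apply hm.congr'
    filter_upwards [eventually_ge_atTop 1] with n hn
    have hzn : (n:ℝ) ≠ 0 := by positivity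
    field_simp
  have hge : ∀ᶠ n : ℕ in atTop, g n = Real.exp (h n) := by
    filter_upwards [eventually_ge_atTop (k+2)] with n hn
    have hn0 : (0:ℝ) < n := by
      have : 0 < n := by omega
      exact_mod_cast this
    have hn1 : (1:ℝ) < n := by
      have : 1 < n := by omega
      exact_mod_cast this
    simp only [hh, hg]
    rw [Real.exp_add, Real.exp_add, Real.exp_sum]
    congr 1
    · congr 1
      apply Finset.prod_congr rfl
      intro i hi
      have hik : i < k := Finset.mem_range.mp hi
      have hp : (0:ℝ) < 1 - (i:ℝ)/n := by
        rw [sub_pos, div_lt_one hn0]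
        have : i < n := by omega
        exact_mod_cast this
      rw [Real.exp_log hp]
    · have hpos : (0:ℝ) < 1 - 1/(n:ℝ) := by
        rw [sub_pos, div_lt_one hn0]; exact hn1
      rw [Real.exp_nat_mul, Real.exp_log hpos]
  have hsmall : ∀ᶠ n : ℕ in atTop, |h n| ≤ 1 := by
    have h1 : ∀ᶠ x : ℝ in 𝓝 0, |x| ≤ 1 := by
      filter_upwards [Metric.ball_mem_nhds (0:ℝ) one_pos] with x hx
      rw [Metric.mem_ball, Real.dist_eq, sub_zero] at hx
      exact hx.le
    exact hh0.eventually h1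
  have hrem : Tendsto (fun n : ℕ => (n:ℝ) * (Real.exp (h n) - 1 - h n)) atTop (𝓝 0) := by
    have hb : Tendsto (fun n : ℕ => (n:ℝ) * h n * h n) atTop (𝓝 (L * 0)) := hNH.mul hh0
    rw [mul_zero] at hb
    apply squeeze_zero_norm' _ hb
    filter_upwards [hsmall] with n hn
    have key := Real.abs_exp_sub_one_sub_id_le hn
    rw [Real.norm_eq_abs, abs_mul, Nat.abs_cast]
    calc (n:ℝ) * |Real.exp (h n) - 1 - h n| ≤ (n:ℝ) * (h n)^2 :=
          mul_le_mul_of_nonneg_left key (Nat.cast_nonneg n)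
      _ = (n:ℝ) * h n * h n := by ring
  have hg1 : Tendsto (fun n : ℕ => (n:ℝ) * (g n - 1)) atTop (𝓝 L) := by
    have hadd := hNH.add hrem
    rw [add_zero] at hadd
    apply hadd.congr'
    filter_upwards [hge] with n hn
    rw [hn]; ring
  have hfin := hg1.const_mul (Real.exp (-1) / (Nat.factorial k : ℝ))
  have hlim : Real.exp (-1) / (Nat.factorial k : ℝ) * L
      = -(Real.exp (-1)) * ((k:ℝ)^2 - 3*(k:ℝ) + 1) / (2 * (Nat.factorial k)) := by
    rw [hL]; ring
  rw [← hlim]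
  apply hfin.congr'
  filter_upwards [eventually_ge_atTop (k+2)] with n hn
  have hnk : k ≤ n := by omega
  have hn0 : (0:ℝ) < n := by
    have : 0 < n := by omega
    exact_mod_cast this
  have hchoose : (n.choose k : ℝ) * (1/(n:ℝ))^k
      = (∏ i ∈ Finset.range k, (1 - (i:ℝ)/n)) / (Nat.factorial k : ℝ) := by
    have hd : (n.descFactorial k : ℝ) = ∏ i ∈ Finset.range k, ((n:ℝ) - i) := by
      rw [Nat.descFactorial_eq_prod_range]
      push_cast
      apply Finset.prod_congr rfl
      intro i hi
      have hik : i ≤ n := le_trans (le_of_lt (Finset.mem_range.mp hi)) hnk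
      rw [Nat.cast_sub hik]
    have hc : (n.choose k : ℝ) = (∏ i ∈ Finset.range k, ((n:ℝ) - i)) / (Nat.factorial k : ℝ) := by
      rw [← hd]
      have hdc := Nat.descFactorial_eq_factorial_mul_choose n k
      have hcast : (n.descFactorial k : ℝ) = (Nat.factorial k : ℝ) * (n.choose k : ℝ) := by
        exact_mod_cast congrArg (Nat.cast : ℕ → ℝ) hdc
      have hfne : (Nat.factorial k : ℝ) ≠ 0 := by exact_mod_cast Nat.factorial_ne_zero k
      rw [hcast, mul_comm, mul_div_assoc, div_self hfne, mul_one]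
    have hone : ((1:ℝ)/n)^k = ∏ _i ∈ Finset.range k, (1/(n:ℝ)) := by
      rw [Finset.prod_const, Finset.card_range]
    rw [hc, hone, div_mul_eq_mul_div, ← Finset.prod_mul_distrib]
    congr 1
    apply Finset.prod_congr rfl
    intro i hi
    field_simp
  have he : Real.exp (-1) * Real.exp 1 = 1 := by
    rw [← Real.exp_add]; norm_num
  rw [hchoose]
  simp only [hg]
  linear_combination ((n:ℝ) * (∏ i ∈ Finset.range k, (1 - (i:ℝ)/n)) *
    (1 - 1/(n:ℝ))^(n - k) / (Nat.factorial k : ℝ)) * he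
end

section
/- There exists a constant C > 0 such that for every integer n ≥ 2 and every integer r with 2 ≤ r ≤ √n, one has Σ_{k=2}^{r} |b(n,k) − e^{−1}/k!| ≤ C·r²/n. In particular, for each fixed r the left-hand side tends to 0 as n → ∞. -/
open Finset

private lemma weier (n : ℕ) (f : ℕ → ℝ) (h0 : ∀ i, 0 ≤ f i) (h1 : ∀ i ∈ range n, f i ≤ 1) :
    1 - ∑ i ∈ range n, f i ≤ ∏ i ∈ range n, (1 - f i) := by
  induction n with
  | zero => simp
  | succ n ih =>
    have h1' : ∀ i ∈ range n, f i ≤ 1 := fun i hi =>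
      h1 i (Finset.mem_range.mpr (lt_trans (Finset.mem_range.mp hi) (Nat.lt_succ_self n)))
    have ih' := ih h1'
    rw [Finset.sum_range_succ, Finset.prod_range_succ]
    have hP0 : (0:ℝ) ≤ ∏ i ∈ range n, (1 - f i) :=
      Finset.prod_nonneg fun i hi => by linarith [h1' i hi]
    have hP1 : ∏ i ∈ range n, (1 - f i) ≤ 1 :=
      Finset.prod_le_one (fun i hi => by linarith [h1' i hi]) (fun i _ => by linarith [h0 i])
    have hfn0 := h0 n
    have hfn1 := h1 n (Finset.mem_range.mpr (Nat.lt_succ_self n))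
    nlinarith

set_option maxHeartbeats 1000000 in
private lemma term_bound (n k : ℕ) (hn : 2 ≤ n) (hk : 2 ≤ k) (hkn : k ≤ n) :
    |(n.choose k : ℝ) * (1/(n:ℝ))^k * (1 - 1/(n:ℝ))^(n-k) -
        Real.exp (-1) / (Nat.factorial k)| ≤ 2 * k / n := by
  have hn0 : (0:ℝ) < n := by positivity
  have hk0 : (0:ℝ) < k := by positivity
  have hk2 : (2:ℝ) ≤ k := by exact_mod_cast hk
  set x : ℝ := 1 - 1/(n:ℝ) with hxdef
  have h1n : (1:ℝ)/n ≤ 1 := by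
    rw [div_le_one hn0]; exact_mod_cast Nat.one_le_iff_ne_zero.mpr (by omega)
  have h1np : (0:ℝ) < 1/n := by positivity
  clear_value x
  have hx0 : 0 ≤ x := by rw [hxdef]; linarith
  have hx1 : x ≤ 1 := by rw [hxdef]; linarith
  set P : ℝ := ∏ i ∈ range k, (1 - (i:ℝ)/n) with hPdef
  -- Step A: binomial identity
  have hA : (n.choose k : ℝ) * (1/(n:ℝ))^k = P / (Nat.factorial k) := by
    have hdesc : (n.descFactorial k : ℝ) = ∏ i ∈ range k, ((n:ℝ) - i) := by
      rw [Nat.descFactorial_eq_prod_range, Nat.cast_prod]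
      refine Finset.prod_congr rfl fun i hi => ?_
      rw [Finset.mem_range] at hi
      have : i ≤ n := le_of_lt (lt_of_lt_of_le hi hkn)
      push_cast [Nat.cast_sub this]; ring
    have hd2 : ((Nat.factorial k : ℝ)) * (n.choose k : ℝ) = ∏ i ∈ range k, ((n:ℝ) - i) := by
      rw [← hdesc]
      exact_mod_cast (congrArg (Nat.cast (R := ℝ)) (Nat.descFactorial_eq_factorial_mul_choose n k)).symm
    have hP : P = (∏ i ∈ range k, ((n:ℝ) - i)) / (n:ℝ)^k := by
      rw [hPdef, show ((n:ℝ))^k = ∏ _i ∈ range k, (n:ℝ) from by simp, ← Finset.prod_div_distrib]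
      refine Finset.prod_congr rfl fun i _ => ?_
      rw [sub_div, div_self (ne_of_gt hn0)]
    rw [hP, ← hd2]
    have hkf : (0:ℝ) < Nat.factorial k := by positivity
    field_simp
    rw [mul_assoc, ← mul_pow, one_div_mul_cancel (ne_of_gt hn0), one_pow, mul_one]
  have hfac : ∀ i ∈ range k, (i:ℝ)/n ≤ 1 := fun i hi => by
    rw [Finset.mem_range] at hi
    have : (i:ℝ) ≤ n := by exact_mod_cast le_of_lt (lt_of_lt_of_le hi hkn)
    exact div_le_one_of_le₀ this (le_of_lt hn0)
  have hP0 : 0 ≤ P := Finset.prod_nonneg fun i hi => by linarith [hfac i hi]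
  have hP1 : P ≤ 1 := Finset.prod_le_one
    (fun i hi => by linarith [hfac i hi])
    (fun i hi => by
      have : (0:ℝ) ≤ (i:ℝ)/n := by positivity
      linarith)
  -- Step B: 1 - P ≤ k^2/n
  have hB : 1 - P ≤ (k:ℝ)^2 / n := by
    have hw := weier k (fun i => (i:ℝ)/n) (fun i => by positivity) hfac
    have hs : ∑ i ∈ range k, (i:ℝ)/n ≤ (k:ℝ)^2 / n := by
      calc ∑ i ∈ range k, (i:ℝ)/n ≤ ∑ _i ∈ range k, (k:ℝ)/n := by
            refine Finset.sum_le_sum fun i hi => ?_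
            rw [Finset.mem_range] at hi
            have : (i:ℝ) ≤ k := by exact_mod_cast le_of_lt hi
            gcongr
        _ = (k:ℝ) * ((k:ℝ)/n) := by rw [Finset.sum_const, Finset.card_range]; simp
        _ = (k:ℝ)^2 / n := by ring
    linarith
  clear_value P
  -- Step C: x^n ≤ e⁻¹ ≤ x^n + 1/n
  have hxn_le : x^n ≤ Real.exp (-1) := by
    have h1 : x ≤ Real.exp (-(1/n)) := by
      have := Real.add_one_le_exp (-(1/(n:ℝ)))
      rw [hxdef]; linarith
    calc x^n ≤ (Real.exp (-(1/n)))^n := pow_le_pow_left₀ hx0 h1 n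
      _ = Real.exp ((n:ℕ) * (-(1/n))) := by rw [← Real.exp_nat_mul]
      _ = Real.exp (-1) := by congr 1; field_simp
  have hn1 : (1:ℝ) ≤ (n:ℝ) - 1 := by
    have : (2:ℝ) ≤ n := by exact_mod_cast hn
    linarith
  have hexp_le : Real.exp (-1) ≤ x^n + 1/n := by
    have hpos : (0:ℝ) < (n:ℝ) - 1 := by linarith
    set E : ℝ := Real.exp (1/((n:ℝ)-1)) with hEdef
    have hE : (n:ℝ)/((n:ℝ)-1) ≤ E := by
      have hb := Real.add_one_le_exp (1/((n:ℝ)-1))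
      have : (n:ℝ)/((n:ℝ)-1) = 1/((n:ℝ)-1) + 1 := by field_simp; ring
      rw [this, hEdef]; exact hb
    have h2 : Real.exp (-(1/((n:ℝ)-1))) ≤ x := by
      have h4 := one_div_le_one_div_of_le (by positivity) hE
      rw [one_div_div] at h4
      rw [Real.exp_neg, ← one_div, ← hEdef]
      calc 1/E ≤ ((n:ℝ)-1)/n := h4
        _ = x := by rw [hxdef]; field_simp
    have hxn1 : Real.exp (-1) ≤ x^(n-1) := by
      calc Real.exp (-1) = (Real.exp (-(1/((n:ℝ)-1))))^(n-1) := by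
            rw [← Real.exp_nat_mul]
            congr 1
            have hc : ((n-1:ℕ):ℝ) = (n:ℝ)-1 := by
              push_cast [Nat.cast_sub (by omega : 1 ≤ n)]; ring
            rw [hc]; field_simp
        _ ≤ x^(n-1) := pow_le_pow_left₀ (Real.exp_pos _).le h2 _
    have hpow1 : x^(n-1) ≤ 1 := pow_le_one₀ hx0 hx1
    have hxsplit : x^n = x^(n-1) * x := by
      rw [← pow_succ, Nat.sub_add_cancel (by omega : 1 ≤ n)]
    have hx1n : 1 - x = 1/n := by rw [hxdef]; ring
    have heq : x^(n-1) - x^n = x^(n-1)*(1-x) := by rw [hxsplit]; ring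
    have key : x^(n-1) * (1 - x) ≤ 1 - x :=
      mul_le_of_le_one_left (by linarith) hpow1
    linarith
  -- Step D: bounds on Q = x^(n-k)
  set Q : ℝ := x^(n-k) with hQdef
  have hQ0 : 0 ≤ Q := pow_nonneg hx0 _
  have hQle1 : Q ≤ 1 := pow_le_one₀ hx0 hx1
  have hQ1 : x^n ≤ Q := pow_le_pow_of_le_one hx0 hx1 (Nat.sub_le n k)
  have hsplit2 : x^n = Q * x^k := by rw [hQdef, ← pow_add, Nat.sub_add_cancel hkn]
  have hbern : 1 - (k:ℝ)*(1/n) ≤ x^k := by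
    have hber := one_add_mul_le_pow (by linarith : (-2:ℝ) ≤ x - 1) k
    have hx' : 1 + (x - 1) = x := by ring
    rw [hx'] at hber
    have : x - 1 = -(1/n) := by rw [hxdef]; ring
    rw [this] at hber
    calc 1 - (k:ℝ)*(1/n) = 1 + (k:ℝ)*(-(1/n)) := by ring
      _ ≤ x^k := hber
  have hxk1 : x^k ≤ 1 := pow_le_one₀ hx0 hx1
  have hQ2 : Q ≤ x^n + (k:ℝ)/n := by
    have hint : (1 - Q) * (1 - x^k) ≥ 0 :=
      mul_nonneg (by linarith) (by linarith)
    have hbern' : 1 - (k:ℝ)/n ≤ x^k := by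
      have h := hbern
      have he : (k:ℝ)*(1/n) = (k:ℝ)/n := by ring
      linarith [he.le, he.symm.le]
    have heq2 : Q - x^n = Q*(1-x^k) := by rw [hsplit2]; ring
    have key2 : Q * (1 - x^k) ≤ 1 - x^k :=
      mul_le_of_le_one_left (by linarith) hQle1
    linarith
  have hQabs : |Q - Real.exp (-1)| ≤ ((k:ℝ)+1)/n := by
    rw [abs_le]
    constructor
    · have : -(((k:ℝ)+1)/n) ≤ -(1/n) := by
        rw [neg_le_neg_iff]
        gcongr
        linarith
      linarith
    · have : (k:ℝ)/n ≤ ((k:ℝ)+1)/n := by gcongr; linarith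
      linarith
  -- combine
  have hkey : |P*Q - Real.exp (-1)| ≤ ((k:ℝ)^2 + k + 1)/n := by
    have h5 : |P*Q - Q| ≤ (k:ℝ)^2/n := by
      rw [abs_of_nonpos (by nlinarith)]
      nlinarith
    calc |P*Q - Real.exp (-1)| ≤ |P*Q - Q| + |Q - Real.exp (-1)| := abs_sub_le _ _ _
      _ ≤ (k:ℝ)^2/n + ((k:ℝ)+1)/n := add_le_add h5 hQabs
      _ = ((k:ℝ)^2 + k + 1)/n := by ring
  have hF0 : (0:ℝ) < (Nat.factorial k : ℝ) := by positivity
  have hFk : (k:ℝ) ≤ (Nat.factorial k : ℝ) := by exact_mod_cast Nat.self_le_factorial k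
  calc |(n.choose k : ℝ) * (1/(n:ℝ))^k * x^(n-k) - Real.exp (-1) / (Nat.factorial k)|
      = |P*Q - Real.exp (-1)| / (Nat.factorial k) := by
        rw [hA, div_mul_eq_mul_div, ← sub_div, abs_div, abs_of_pos hF0]
    _ ≤ (((k:ℝ)^2 + k + 1)/n) / (Nat.factorial k) := by gcongr
    _ = (((k:ℝ)^2 + k + 1)/(Nat.factorial k)) / n := by ring
    _ ≤ (2*(k:ℝ)) / n := by
        gcongr
        rw [div_le_iff₀ hF0]
        nlinarith
    _ = 2 * k / n := rfl

/-- uniform bound Σ_{k=2}^{r} |b(n,k) − e⁻¹/k!| ≤ C·r²/n for 2 ≤ r ≤ √n. -/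
theorem sum_b_minus_poisson_bound :
    ∃ C : ℝ, 0 < C ∧ ∀ n : ℕ, 2 ≤ n → ∀ r : ℕ, 2 ≤ r → (r:ℝ) ≤ Real.sqrt n →
      ∑ k ∈ Finset.Icc 2 r,
        |(n.choose k : ℝ) * (1/(n:ℝ))^k * (1 - 1/(n:ℝ))^(n-k) -
          Real.exp (-1) / (Nat.factorial k)| ≤ C * (r:ℝ)^2 / n := by
  refine ⟨4, by norm_num, fun n hn r hr hrs => ?_⟩
  have hn0 : (0:ℝ) < n := by positivity
  have hr0 : (0:ℝ) < r := by positivity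
  have hsn : Real.sqrt n ≤ n := by
    have h2 : (2:ℝ) ≤ n := by exact_mod_cast hn
    calc Real.sqrt n ≤ Real.sqrt ((n:ℝ)^2) := Real.sqrt_le_sqrt (by nlinarith)
      _ = n := Real.sqrt_sq (by positivity)
  have hrn : (r:ℝ) ≤ n := hrs.trans hsn
  have hrnn : r ≤ n := by exact_mod_cast hrn
  have hb : ∀ k ∈ Finset.Icc 2 r,
      |(n.choose k : ℝ) * (1/(n:ℝ))^k * (1 - 1/(n:ℝ))^(n-k) -
          Real.exp (-1) / (Nat.factorial k)| ≤ 2 * (r:ℝ) / n := by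
    intro k hkmem
    rw [Finset.mem_Icc] at hkmem
    refine (term_bound n k hn hkmem.1 (hkmem.2.trans hrnn)).trans ?_
    gcongr
    exact_mod_cast hkmem.2
  calc ∑ k ∈ Finset.Icc 2 r,
        |(n.choose k : ℝ) * (1/(n:ℝ))^k * (1 - 1/(n:ℝ))^(n-k) -
          Real.exp (-1) / (Nat.factorial k)|
      ≤ (Finset.Icc 2 r).card • (2 * (r:ℝ) / n) := Finset.sum_le_card_nsmul _ _ _ hb
    _ = ((r - 1 : ℕ) : ℝ) * (2 * (r:ℝ) / n) := by
        rw [Nat.card_Icc, nsmul_eq_mul, show r+1-2 = r-1 from by omega]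
    _ ≤ (r:ℝ) * (2 * (r:ℝ) / n) := by
        have : ((r - 1 : ℕ) : ℝ) ≤ (r:ℝ) := by exact_mod_cast Nat.sub_le r 1
        gcongr
    _ = 2 * (r:ℝ)^2 / n := by ring
    _ ≤ 4 * (r:ℝ)^2 / n := by
        rw [div_le_div_iff₀ (by positivity) hn0]
        nlinarith
end

section
/- The variance V(n) := M2(n) − M(n)² converges as n → ∞ to (1/(1−e^{−1})²)·(e^{−1} + (1−e^{−1})·S₂ − S₁²), where S₁ = Σ_{k≥2} (e^{−1}/k!)·M(k) and S₂ = Σ_{k≥2} (e^{−1}/k!)·M2(k). (Numerically this limit equals 2.832554383….) -/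
open Filter Topology Finset

namespace VarianceAux




noncomputable def b (n k : ℕ) : ℝ :=
  (n.choose k : ℝ) * (1/(n:ℝ))^k * (1 - 1/(n:ℝ))^(n-k)

lemma one_sub_mem (n : ℕ) (hn : 1 ≤ n) : 0 ≤ 1 - 1/(n:ℝ) ∧ 1 - 1/(n:ℝ) ≤ 1 := by
  have h1 : (1:ℝ) ≤ n := by exact_mod_cast hn
  have h0 : (0:ℝ) < n := by linarith
  constructor
  · have : 1/(n:ℝ) ≤ 1 := by rw [div_le_one h0]; exact h1
    linarith
  · have : 0 ≤ 1/(n:ℝ) := by positivity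
    linarith

lemma b_nonneg (n k : ℕ) (hn : 1 ≤ n) : 0 ≤ b n k := by
  obtain ⟨h0, _⟩ := one_sub_mem n hn
  unfold b; positivity

lemma b_le (n k : ℕ) (hn : 1 ≤ n) : b n k ≤ 1 / (k.factorial : ℝ) := by
  obtain ⟨h0, h1⟩ := one_sub_mem n hn
  have hn0 : (0:ℝ) < n := by exact_mod_cast hn
  have hch : (n.choose k : ℝ) * (k.factorial : ℝ) ≤ (n:ℝ)^k := by
    have := Nat.descFactorial_le_pow n k
    rw [Nat.descFactorial_eq_factorial_mul_choose] at this
    calc (n.choose k : ℝ) * (k.factorial : ℝ) = ((k.factorial * n.choose k : ℕ) : ℝ) := by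
          push_cast; ring
    _ ≤ ((n^k : ℕ) : ℝ) := by exact_mod_cast this
    _ = (n:ℝ)^k := by push_cast; ring
  have hkf : (0:ℝ) < (k.factorial : ℝ) := by exact_mod_cast k.factorial_pos
  have h2 : (n.choose k : ℝ) * (1/(n:ℝ))^k ≤ 1 / (k.factorial : ℝ) := by
    rw [one_div_pow, le_div_iff₀ hkf, mul_right_comm, mul_one_div, div_le_one (by positivity)]
    exact hch
  calc b n k ≤ (n.choose k : ℝ) * (1/(n:ℝ))^k * 1 := by
        unfold b
        apply mul_le_mul_of_nonneg_left (pow_le_one₀ h0 h1) (by positivity)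
  _ ≤ 1 / (k.factorial : ℝ) := by rw [mul_one]; exact h2

lemma b_sum (n : ℕ) (hn : 1 ≤ n) : ∑ k ∈ range (n+1), b n k = 1 := by
  have h0 : (0:ℝ) < n := by exact_mod_cast hn
  have := add_pow (1/(n:ℝ)) (1 - 1/(n:ℝ)) n
  have hxy : (1/(n:ℝ) + (1 - 1/(n:ℝ))) = 1 := by ring
  rw [hxy, one_pow] at this
  rw [this]
  apply Finset.sum_congr rfl
  intro k _
  unfold b; ring

lemma b_zero (n : ℕ) : b n 0 = (1 - 1/(n:ℝ))^n := by simp [b]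

lemma b_top (n : ℕ) (hn : 1 ≤ n) : b n n = (1/(n:ℝ))^n := by simp [b]

lemma b_one (n : ℕ) (hn : 1 ≤ n) : b n 1 = (1 - 1/(n:ℝ))^(n-1) := by
  have h0 : (n:ℝ) ≠ 0 := by positivity
  simp [b, Nat.choose_one_right]
  field_simp

lemma exp_le_b_one (n : ℕ) (hn : 2 ≤ n) : Real.exp (-1) ≤ b n 1 := by
  rw [b_one n (by omega)]
  set m : ℕ := n - 1 with hm
  have hmn : n = m + 1 := by omega
  have hm1 : 1 ≤ m := by omega
  have hmpos : (0:ℝ) < m := by exact_mod_cast hm1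
  have key : (1 + 1/(m:ℝ))^m ≤ Real.exp 1 := by
    calc (1 + 1/(m:ℝ))^m ≤ (Real.exp (1/(m:ℝ)))^m := by
          apply pow_le_pow_left₀ (by positivity)
          linarith [Real.add_one_le_exp (1/(m:ℝ))]
    _ = Real.exp ((m:ℝ) * (1/(m:ℝ))) := by rw [Real.exp_nat_mul]
    _ = Real.exp 1 := by congr 1; field_simp
  have hbase : 1 - 1/(n:ℝ) = ((1 + 1/(m:ℝ)))⁻¹ := by
    have h0 : (n:ℝ) ≠ 0 := by positivity
    have : (n:ℝ) = (m:ℝ) + 1 := by rw [hmn]; push_cast; ring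
    rw [this]
    field_simp
    ring
  rw [hbase, Real.exp_neg, inv_pow]
  exact inv_anti₀ (by positivity) key

lemma b_one_ge_third (n : ℕ) (hn : 2 ≤ n) : 1/3 ≤ b n 1 := by
  refine le_trans ?_ (exp_le_b_one n hn)
  have h3 : Real.exp 1 ≤ 3 := le_of_lt (lt_trans Real.exp_one_lt_d9 (by norm_num))
  rw [Real.exp_neg]
  calc (1:ℝ)/3 = 3⁻¹ := by norm_num
  _ ≤ (Real.exp 1)⁻¹ := inv_anti₀ (Real.exp_pos 1) h3







lemma sum_Icc2 (n : ℕ) (hn : 1 ≤ n) : ∑ k ∈ Icc 2 n, b n k = 1 - b n 0 - b n 1 := by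
  have h := b_sum n hn
  rw [Finset.range_eq_Ico] at h
  rw [← Finset.sum_Ico_consecutive (fun k => b n k) (by omega : 0 ≤ 2) (by omega : 2 ≤ n+1)] at h
  simp only [Finset.Ico_add_one_right_eq_Icc] at h
  have h2 : ∑ k ∈ Finset.Icc 0 1, b n k = b n 0 + b n 1 := by
    rw [show (1:ℕ) = 0 + 1 from rfl, Finset.sum_Icc_succ_top (by omega), Finset.Icc_self,
      Finset.sum_singleton]
  rw [show Finset.Ico 0 2 = Finset.Icc 0 1 by ext x; simp] at h
  rw [h2] at h
  linarith

lemma sum_split_top (n : ℕ) (hn : 2 ≤ n) (f : ℕ → ℝ) :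
    ∑ k ∈ Icc 2 n, b n k * f k = ∑ k ∈ Icc 2 (n-1), b n k * f k + b n n * f n := by
  have h : n - 1 + 1 = n := by omega
  calc ∑ k ∈ Icc 2 n, b n k * f k = ∑ k ∈ Icc 2 ((n-1)+1), b n k * f k := by rw [h]
  _ = ∑ k ∈ Icc 2 (n-1), b n k * f k + b n ((n-1)+1) * f ((n-1)+1) :=
      Finset.sum_Icc_succ_top (by omega) _
  _ = ∑ k ∈ Icc 2 (n-1), b n k * f k + b n n * f n := by rw [h]

lemma choose_div_pow_tendsto (k : ℕ) :
    Tendsto (fun n : ℕ => (n.choose k : ℝ) * (1/(n:ℝ))^k) atTop (𝓝 (1 / (k.factorial : ℝ))) := by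
  induction k with
  | zero => simp
  | succ k ih =>
    have hlim : Tendsto (fun n : ℕ => ((n.choose k : ℝ) * (1/(n:ℝ))^k) * ((1 - (k:ℝ)/(n:ℝ)) / ((k:ℝ)+1)))
        atTop (𝓝 ((1 / (k.factorial : ℝ)) * (1 / ((k:ℝ)+1)))) := by
      apply ih.mul
      have h1 : Tendsto (fun n : ℕ => (k:ℝ)/(n:ℝ)) atTop (𝓝 0) :=
        tendsto_const_div_atTop_nhds_zero_nat _
      have h2 : Tendsto (fun n : ℕ => (1 - (k:ℝ)/(n:ℝ))) atTop (𝓝 1) := by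
        simpa using tendsto_const_nhds.sub h1
      simpa using h2.div_const ((k:ℝ)+1)
    have hval : (1 / (k.factorial : ℝ)) * (1 / ((k:ℝ)+1)) = 1 / ((k+1).factorial : ℝ) := by
      rw [Nat.factorial_succ]
      push_cast
      rw [one_div_mul_one_div]
      ring_nf
    rw [hval] at hlim
    apply hlim.congr'
    filter_upwards [eventually_ge_atTop (k+1)] with n hn
    have hn0 : (0:ℝ) < n := by
      have : 1 ≤ n := by omega
      exact_mod_cast Nat.lt_of_lt_of_le Nat.zero_lt_one this
    have hkn : k ≤ n := by omega
    have hc : (n.choose (k+1) : ℝ) * ((k:ℝ)+1) = (n.choose k : ℝ) * ((n:ℝ) - (k:ℝ)) := by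
      have := Nat.choose_succ_right_eq n k
      have hcast : ((n.choose (k+1) * (k+1) : ℕ) : ℝ) = ((n.choose k * (n - k) : ℕ) : ℝ) := by
        exact_mod_cast congrArg (Nat.cast : ℕ → ℝ) this
      push_cast [Nat.cast_sub hkn] at hcast
      linarith
    have hk1 : ((k:ℝ)+1) ≠ 0 := by positivity
    have hn0' : (n:ℝ) ≠ 0 := hn0.ne'
    rw [one_div_pow, one_div_pow]
    field_simp
    linear_combination (-(n:ℝ)^(k+1)) * hc

lemma q_tendsto : Tendsto (fun n : ℕ => (1 - 1/(n:ℝ))^n) atTop (𝓝 (Real.exp (-1))) := by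
  have := Real.tendsto_one_add_div_pow_exp (-1)
  apply this.congr
  intro n
  congr 1
  ring

lemma one_sub_tendsto : Tendsto (fun n : ℕ => (1 - 1/(n:ℝ))) atTop (𝓝 1) := by
  simpa using (tendsto_const_nhds (x := (1:ℝ))).sub (tendsto_const_div_atTop_nhds_zero_nat (1:ℝ))

lemma b_tendsto (k : ℕ) :
    Tendsto (fun n : ℕ => b n k) atTop (𝓝 (Real.exp (-1) / (k.factorial : ℝ))) := by
  have h2 : Tendsto (fun n : ℕ => (1 - 1/(n:ℝ))^(n - k)) atTop (𝓝 (Real.exp (-1))) := by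
    have h3 : Tendsto (fun n : ℕ => (1 - 1/(n:ℝ))^n * ((1 - 1/(n:ℝ))^k)⁻¹) atTop
        (𝓝 (Real.exp (-1) * 1⁻¹)) := by
      apply q_tendsto.mul
      have : Tendsto (fun n : ℕ => ((1 - 1/(n:ℝ))^k)) atTop (𝓝 1) := by
        simpa using one_sub_tendsto.pow k
      exact (this.inv₀ (by norm_num))
    rw [inv_one, mul_one] at h3
    apply h3.congr'
    filter_upwards [eventually_ge_atTop (k+2)] with n hn
    have hn2 : (2:ℝ) ≤ (n:ℝ) := by exact_mod_cast (by omega : 2 ≤ n)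
    have hne : (1:ℝ) - 1/(n:ℝ) ≠ 0 := by
      have : 1/(n:ℝ) ≤ 1/2 := by
        apply one_div_le_one_div_of_le <;> linarith
      linarith
    rw [pow_sub₀ _ hne (by omega : k ≤ n)]
  have := (choose_div_pow_tendsto k).mul h2
  rw [show (1:ℝ) / (k.factorial : ℝ) * Real.exp (-1) = Real.exp (-1) / (k.factorial : ℝ) by ring]
    at this
  exact this.congr (fun n => by unfold b; ring)







lemma sum_mid (n : ℕ) (hn : 2 ≤ n) :
    ∑ k ∈ Icc 2 (n-1), b n k = 1 - b n 0 - b n 1 - b n n := by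
  have h1 := sum_Icc2 n (by omega)
  have h2 := sum_split_top n hn (fun _ => 1)
  simp only [mul_one] at h2
  linarith

lemma d_ge (n : ℕ) (hn : 2 ≤ n) : b n 1 ≤ 1 - b n 0 - b n n := by
  have h := sum_mid n hn
  have hnn : 0 ≤ ∑ k ∈ Icc 2 (n-1), b n k :=
    Finset.sum_nonneg fun k _ => b_nonneg n k (by omega)
  linarith

lemma M_bound (M : ℕ → ℝ) (hM1 : M 1 = 0)
    (hM : ∀ n, 2 ≤ n → M n = 1 + b n 0 * M n + ∑ k ∈ Icc 2 n, b n k * M k) :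
    ∀ n, 1 ≤ n → 0 ≤ M n ∧ M n ≤ 3 := by
  intro n
  induction n using Nat.strong_induction_on with
  | _ n ih =>
    intro hn1
    rcases eq_or_lt_of_le hn1 with h1 | hn
    · rw [← h1, hM1]; norm_num
    · have heq := hM n hn
      rw [sum_split_top n hn] at heq
      set S := ∑ k ∈ Icc 2 (n-1), b n k * M k with hS
      have hd : M n * (1 - b n 0 - b n n) = 1 + S := by ring_nf; ring_nf at heq; linarith
      have hb1 : 1/3 ≤ b n 1 := b_one_ge_third n hn
      have hdge := d_ge n hn
      have hdpos : 0 < 1 - b n 0 - b n n := by linarith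
      have hS0 : 0 ≤ S := by
        apply Finset.sum_nonneg
        intro k hk
        rw [Finset.mem_Icc] at hk
        exact mul_nonneg (b_nonneg n k (by omega)) ((ih k (by omega) (by omega)).1)
      have hS3 : S ≤ 3 * (1 - b n 0 - b n 1 - b n n) := by
        have : S ≤ ∑ k ∈ Icc 2 (n-1), b n k * 3 := by
          apply Finset.sum_le_sum
          intro k hk
          rw [Finset.mem_Icc] at hk
          exact mul_le_mul_of_nonneg_left ((ih k (by omega) (by omega)).2)
            (b_nonneg n k (by omega))
        rw [← Finset.sum_mul, sum_mid n hn] at this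
        linarith
      have hMeq : M n = (1 + S) / (1 - b n 0 - b n n) := by
        rw [eq_div_iff (ne_of_gt hdpos)]; exact hd
      constructor
      · rw [hMeq]; exact div_nonneg (by linarith) hdpos.le
      · rw [hMeq, div_le_iff₀ hdpos]; linarith

lemma M2_bound (M M2 : ℕ → ℝ) (hMb : ∀ n, 1 ≤ n → 0 ≤ M n ∧ M n ≤ 3) (hM21 : M2 1 = 0)
    (hM2 : ∀ n, 2 ≤ n → M2 n = 1 + 2 * b n 0 * M n + b n 0 * M2 n +
      2 * ∑ k ∈ Icc 2 n, b n k * M k + ∑ k ∈ Icc 2 n, b n k * M2 k) :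
    ∀ n, 1 ≤ n → 0 ≤ M2 n ∧ M2 n ≤ 21 := by
  intro n
  induction n using Nat.strong_induction_on with
  | _ n ih =>
    intro hn1
    rcases eq_or_lt_of_le hn1 with h1 | hn
    · rw [← h1, hM21]; norm_num
    · have heq := hM2 n hn
      rw [sum_split_top n hn M2] at heq
      set S2 := ∑ k ∈ Icc 2 (n-1), b n k * M2 k with hS2def
      set SM := ∑ k ∈ Icc 2 n, b n k * M k with hSMdef
      have hd : M2 n * (1 - b n 0 - b n n) = 1 + 2 * b n 0 * M n + 2 * SM + S2 := by
        ring_nf; ring_nf at heq; linarith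
      have hb1 : 1/3 ≤ b n 1 := b_one_ge_third n hn
      have hdge := d_ge n hn
      have hdpos : 0 < 1 - b n 0 - b n n := by linarith
      have hb0 : 0 ≤ b n 0 := b_nonneg n 0 (by omega)
      have hMn := hMb n (by omega)
      have hSM0 : 0 ≤ SM := by
        apply Finset.sum_nonneg
        intro k hk
        rw [Finset.mem_Icc] at hk
        exact mul_nonneg (b_nonneg n k (by omega)) ((hMb k (by omega)).1)
      have hSM3 : SM ≤ 3 * (1 - b n 0 - b n 1) := by
        have : SM ≤ ∑ k ∈ Icc 2 n, b n k * 3 := by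
          apply Finset.sum_le_sum
          intro k hk
          rw [Finset.mem_Icc] at hk
          exact mul_le_mul_of_nonneg_left ((hMb k (by omega)).2) (b_nonneg n k (by omega))
        rw [← Finset.sum_mul, sum_Icc2 n (by omega)] at this
        linarith
      have hS20 : 0 ≤ S2 := by
        apply Finset.sum_nonneg
        intro k hk
        rw [Finset.mem_Icc] at hk
        exact mul_nonneg (b_nonneg n k (by omega)) ((ih k (by omega) (by omega)).1)
      have hS221 : S2 ≤ 21 * (1 - b n 0 - b n 1 - b n n) := by
        have : S2 ≤ ∑ k ∈ Icc 2 (n-1), b n k * 21 := by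
          apply Finset.sum_le_sum
          intro k hk
          rw [Finset.mem_Icc] at hk
          exact mul_le_mul_of_nonneg_left ((ih k (by omega) (by omega)).2)
            (b_nonneg n k (by omega))
        rw [← Finset.sum_mul, sum_mid n hn] at this
        linarith
      have hM2eq : M2 n = (1 + 2 * b n 0 * M n + 2 * SM + S2) / (1 - b n 0 - b n n) := by
        rw [eq_div_iff (ne_of_gt hdpos)]; exact hd
      have hb0M : 2 * b n 0 * M n ≤ 6 * b n 0 := by nlinarith [hMn.1, hMn.2]
      constructor
      · rw [hM2eq]
        apply div_nonneg _ hdpos.le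
        have h20 : 0 ≤ 2 * b n 0 * M n := mul_nonneg (by linarith) hMn.1
        linarith
      · rw [hM2eq, div_le_iff₀ hdpos]
        linarith







lemma summable_bound (C : ℝ) : Summable (fun j : ℕ => C * (1 / (((j+2).factorial : ℕ) : ℝ))) := by
  apply Summable.mul_left
  have h := Real.summable_pow_div_factorial 1
  simp only [one_pow] at h
  have h2 := (summable_nat_add_iff 2).2 h
  simpa [one_div] using h2

lemma sum_tendsto (f : ℕ → ℝ) (C : ℝ) (hf : ∀ k, 2 ≤ k → |f k| ≤ C) :
    Tendsto (fun n : ℕ => ∑ k ∈ Icc 2 n, b n k * f k) atTop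
      (𝓝 (∑' j : ℕ, Real.exp (-1) / (((j+2).factorial : ℕ) : ℝ) * f (j+2))) := by
  have hC : 0 ≤ C := le_trans (abs_nonneg _) (hf 2 le_rfl)
  set G : ℕ → ℕ → ℝ := fun n j => if j + 2 ≤ n then b n (j+2) * f (j+2) else 0 with hG
  have hrepr : ∀ n : ℕ, ∑ k ∈ Icc 2 n, b n k * f k = ∑' j, G n j := by
    intro n
    rw [tsum_eq_sum (s := Finset.range (n-1)) ?_]
    · rw [← Finset.Ico_add_one_right_eq_Icc, Finset.sum_Ico_eq_sum_range]
      rw [show n + 1 - 2 = n - 1 by omega]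
      apply Finset.sum_congr rfl
      intro j hj
      rw [Finset.mem_range] at hj
      have hjn : j + 2 ≤ n := by omega
      simp only [hG]
      rw [if_pos hjn, show 2 + j = j + 2 by omega]
    · intro j hj
      rw [Finset.mem_range] at hj
      have : ¬ (j + 2 ≤ n) := by omega
      simp only [hG]
      rw [if_neg this]
  have hmain : Tendsto (fun n : ℕ => ∑' j, G n j) atTop
      (𝓝 (∑' j : ℕ, Real.exp (-1) / (((j+2).factorial : ℕ) : ℝ) * f (j+2))) := by
    apply tendsto_tsum_of_dominated_convergence
      (bound := fun j : ℕ => C * (1 / (((j+2).factorial : ℕ) : ℝ)))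
      (summable_bound C)
    · intro j
      have hb := (b_tendsto (j+2)).mul_const (f (j+2))
      apply hb.congr'
      filter_upwards [eventually_ge_atTop (j+2)] with n hn
      simp only [hG]
      rw [if_pos hn]
    · filter_upwards [eventually_ge_atTop 1] with n hn j
      simp only [hG]
      by_cases hj : j + 2 ≤ n
      · rw [if_pos hj]
        rw [Real.norm_eq_abs, abs_mul, abs_of_nonneg (b_nonneg n (j+2) hn)]
        calc b n (j+2) * |f (j+2)| ≤ (1 / (((j+2).factorial : ℕ) : ℝ)) * C := by
              apply mul_le_mul (b_le n (j+2) hn) (hf (j+2) (by omega)) (abs_nonneg _)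
              positivity
        _ = C * (1 / (((j+2).factorial : ℕ) : ℝ)) := by ring
      · rw [if_neg hj]
        simp only [norm_zero]
        positivity
  exact hmain.congr (fun n => (hrepr n).symm)


lemma b_zero_lt_one (n : ℕ) (hn : 2 ≤ n) : b n 0 < 1 := by
  rw [b_zero]
  have hn1 : (1:ℝ) ≤ (n:ℝ) := by exact_mod_cast (by omega : 1 ≤ n)
  have hn0 : (0:ℝ) < (n:ℝ) := by linarith
  apply pow_lt_one₀
  · have : 1/(n:ℝ) ≤ 1 := by rw [div_le_one hn0]; exact hn1
    linarith
  · have : 0 < 1/(n:ℝ) := by positivity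
    linarith
  · omega


end VarianceAux

open VarianceAux in
/-- the variance V(n) = M2(n) − M(n)² converges to
    (1/(1−e⁻¹)²)·(e⁻¹ + (1−e⁻¹)·S₂ − S₁²). -/
theorem variance_tendsto
    (M M2 : ℕ → ℝ)
    (hM1 : M 1 = 0)
    (hM : ∀ n : ℕ, 2 ≤ n →
      M n = 1 + (1 - 1/(n:ℝ))^n * M n +
        ∑ k ∈ Finset.Icc 2 n,
          (n.choose k : ℝ) * (1/(n:ℝ))^k * (1 - 1/(n:ℝ))^(n-k) * M k)
    (hM21 : M2 1 = 0)
    (hM2 : ∀ n : ℕ, 2 ≤ n →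
      M2 n = 1 + 2 * (1 - 1/(n:ℝ))^n * M n + (1 - 1/(n:ℝ))^n * M2 n +
        2 * ∑ k ∈ Finset.Icc 2 n,
          (n.choose k : ℝ) * (1/(n:ℝ))^k * (1 - 1/(n:ℝ))^(n-k) * M k +
        ∑ k ∈ Finset.Icc 2 n,
          (n.choose k : ℝ) * (1/(n:ℝ))^k * (1 - 1/(n:ℝ))^(n-k) * M2 k) :
    Tendsto (fun n : ℕ => M2 n - (M n)^2) atTop
      (𝓝 (1 / (1 - Real.exp (-1))^2 *
        (Real.exp (-1) +
          (1 - Real.exp (-1)) *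
            (∑' k : ℕ, Real.exp (-1) / (Nat.factorial (k+2)) * M2 (k+2)) -
          (∑' k : ℕ, Real.exp (-1) / (Nat.factorial (k+2)) * M (k+2))^2))) := by
  -- recursions in b-form
  have hMb : ∀ n, 2 ≤ n → M n = 1 + b n 0 * M n + ∑ k ∈ Icc 2 n, b n k * M k := by
    intro n hn
    have := hM n hn
    simpa only [b, Nat.choose_zero_right, Nat.cast_one, pow_zero, one_mul, Nat.sub_zero]
      using this
  have hM2b : ∀ n, 2 ≤ n → M2 n = 1 + 2 * b n 0 * M n + b n 0 * M2 n +
      2 * ∑ k ∈ Icc 2 n, b n k * M k + ∑ k ∈ Icc 2 n, b n k * M2 k := by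
    intro n hn
    have := hM2 n hn
    simpa only [b, Nat.choose_zero_right, Nat.cast_one, pow_zero, one_mul, Nat.sub_zero,
      mul_one] using this
  -- bounds
  have hMB := M_bound M hM1 hMb
  have hM2B := M2_bound M M2 hMB hM21 hM2b
  -- limits of the sums
  set S1 : ℝ := ∑' k : ℕ, Real.exp (-1) / (Nat.factorial (k+2) : ℝ) * M (k+2) with hS1def
  set S2 : ℝ := ∑' k : ℕ, Real.exp (-1) / (Nat.factorial (k+2) : ℝ) * M2 (k+2) with hS2def
  have hS1 : Tendsto (fun n : ℕ => ∑ k ∈ Icc 2 n, b n k * M k) atTop (𝓝 S1) :=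
    sum_tendsto M 3 (fun k hk => abs_le.mpr ⟨by linarith [(hMB k (by omega)).1],
      (hMB k (by omega)).2⟩)
  have hS2 : Tendsto (fun n : ℕ => ∑ k ∈ Icc 2 n, b n k * M2 k) atTop (𝓝 S2) :=
    sum_tendsto M2 21 (fun k hk => abs_le.mpr ⟨by linarith [(hM2B k (by omega)).1],
      (hM2B k (by omega)).2⟩)
  have hq0 : Tendsto (fun n : ℕ => b n 0) atTop (𝓝 (Real.exp (-1))) :=
    q_tendsto.congr (fun n => (b_zero n).symm)
  have hexp1 : Real.exp (-1) < 1 := by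
    rw [Real.exp_lt_one_iff]; norm_num
  have hne : (1:ℝ) - Real.exp (-1) ≠ 0 := by linarith
  -- limit of M
  set L : ℝ := (1 + S1) / (1 - Real.exp (-1)) with hLdef
  have hMlim : Tendsto M atTop (𝓝 L) := by
    have h := ((tendsto_const_nhds (x := (1:ℝ))).add hS1).div ((tendsto_const_nhds (x := (1:ℝ))).sub hq0) hne
    apply h.congr'
    filter_upwards [eventually_ge_atTop 2] with n hn
    have heq := hMb n hn
    have hlt := b_zero_lt_one n hn
    show (1 + ∑ k ∈ Icc 2 n, b n k * M k) / (1 - b n 0) = M n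
    rw [div_eq_iff (by linarith : 1 - b n 0 ≠ 0)]
    linarith
  -- limit of M2
  set L2 : ℝ := (1 + 2 * Real.exp (-1) * L + 2 * S1 + S2) / (1 - Real.exp (-1)) with hL2def
  have hM2lim : Tendsto M2 atTop (𝓝 L2) := by
    have hnum : Tendsto
        (fun n : ℕ => 1 + 2 * b n 0 * M n + 2 * (∑ k ∈ Icc 2 n, b n k * M k) +
          ∑ k ∈ Icc 2 n, b n k * M2 k) atTop
        (𝓝 (1 + 2 * Real.exp (-1) * L + 2 * S1 + S2)) := by
      exact (((tendsto_const_nhds (x := (1:ℝ))).add (((hq0.const_mul 2).mul hMlim))).add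
        (hS1.const_mul 2)).add hS2
    have h := hnum.div ((tendsto_const_nhds (x := (1:ℝ))).sub hq0) hne
    apply h.congr'
    filter_upwards [eventually_ge_atTop 2] with n hn
    have heq := hM2b n hn
    have hlt := b_zero_lt_one n hn
    show (1 + 2 * b n 0 * M n + 2 * (∑ k ∈ Icc 2 n, b n k * M k) +
      ∑ k ∈ Icc 2 n, b n k * M2 k) / (1 - b n 0) = M2 n
    rw [div_eq_iff (by linarith : 1 - b n 0 ≠ 0)]
    linarith
  have hfinal := hM2lim.sub (hMlim.pow 2)
  have hval : L2 - L^2 = 1 / (1 - Real.exp (-1))^2 *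
      (Real.exp (-1) + (1 - Real.exp (-1)) * S2 - S1^2) := by
    rw [hL2def, hLdef]
    field_simp
    ring
  rw [hval] at hfinal
  exact hfinal
end
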